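/- arXiv:0809.1842 — 6 statements merged into one kernel-verified Lean document; each statement's English description precedes it below -/
import Mathlib

section
/- For real numbers λ > 0 and q with |q| < λ, the function v_{λ,q}(x) = λ sech(λ|x| + arctanh(q/λ)) satisfies ∫_ℝ v_{λ,q}(x)² dx = 2(λ − q). -/
noncomputable def arctanh (x : ℝ) : ℝ := (1/2) * Real.log ((1+x)/(1-x))

open Real MeasureTheory Set Filter Topology

lemma tanh_lim : Tendsto (fun u : ℝ => Real.sinh u / Real.cosh u) atTop (𝓝 1) := by
  have heq : ∀ u : ℝ, Real.sinh u / Real.cosh u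
      = (1 - Real.exp (-(2*u))) / (1 + Real.exp (-(2*u))) := by
    intro u
    rw [Real.sinh_eq, Real.cosh_eq]
    have h1 : Real.exp (-(2*u)) = Real.exp (-u) * Real.exp (-u) := by
      rw [← Real.exp_add]; ring_nf
    have h2 : Real.exp (-u) = (Real.exp u)⁻¹ := Real.exp_neg u
    have h3 := Real.exp_pos u
    have h4 := Real.exp_pos (-u)
    rw [h1, h2]
    field_simp
  have hlim : Tendsto (fun u : ℝ => Real.exp (-(2*u))) atTop (𝓝 0) := by
    apply Real.tendsto_exp_atBot.comp
    exact tendsto_neg_atBot_iff.mpr (tendsto_id.const_mul_atTop two_pos)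
  simp only [heq]
  have : Tendsto (fun t : ℝ => (1 - t) / (1 + t)) (𝓝 0) (𝓝 1) := by
    have : ContinuousAt (fun t : ℝ => (1 - t) / (1 + t)) 0 := by
      apply ContinuousAt.div (by fun_prop) (by fun_prop); norm_num
    simpa using this.tendsto
  exact this.comp hlim

lemma tanh_arctanh {y : ℝ} (hy : |y| < 1) :
    Real.sinh (arctanh y) / Real.cosh (arctanh y) = y := by
  obtain ⟨h1, h2⟩ := abs_lt.mp hy
  have hm : (0:ℝ) < 1 - y := by linarith
  have hp : (0:ℝ) < 1 + y := by linarith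
  set c := arctanh y with hc
  have hE2 : Real.exp c * Real.exp c = (1+y)/(1-y) := by
    rw [← Real.exp_add, hc, arctanh, show (1/2) * Real.log ((1+y)/(1-y)) + (1/2) * Real.log ((1+y)/(1-y)) = Real.log ((1+y)/(1-y)) by ring]
    exact Real.exp_log (by positivity)
  have hE := Real.exp_pos c
  rw [Real.sinh_eq, Real.cosh_eq, Real.exp_neg]
  have key : Real.exp c * Real.exp c * (1 - y) = 1 + y := by
    rw [hE2]; field_simp
  field_simp
  nlinarith [Real.exp_pos c]

/-- For `λ > 0` and `|q| < λ`, the ground state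
`v_{λ,q}(x) = λ sech(λ|x| + arctanh(q/λ))` has mass `2(λ - q)`. -/
theorem stmt0 (lam q : ℝ) (hlam : 0 < lam) (hq : |q| < lam) :
    ∫ x : ℝ, (lam / Real.cosh (lam * |x| + arctanh (q / lam)))^2 = 2 * (lam - q) := by
  set c := arctanh (q / lam) with hc
  have hy : |q / lam| < 1 := by
    rw [abs_div, abs_of_pos hlam, div_lt_one hlam]; exact hq
  have htanh : Real.sinh c / Real.cosh c = q / lam := tanh_arctanh hy
  rw [integral_comp_abs (f := fun x => (lam / Real.cosh (lam * x + c))^2)]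
  have key : ∫ x in Ioi (0:ℝ), (lam / Real.cosh (lam * x + c))^2 = lam - q := by
    have hderiv : ∀ x ∈ Ici (0:ℝ),
        HasDerivAt (fun x => lam * (Real.sinh (lam * x + c) / Real.cosh (lam * x + c)))
          ((lam / Real.cosh (lam * x + c))^2) x := by
      intro x _
      have hu : HasDerivAt (fun x : ℝ => lam * x + c) lam x := by
        simpa using ((hasDerivAt_id x).const_mul lam).add_const c
      set u := lam * x + c
      have hs : HasDerivAt (fun x : ℝ => Real.sinh (lam * x + c)) (Real.cosh u * lam) x :=
        HasDerivAt.comp (h₂ := Real.sinh) x (Real.hasDerivAt_sinh u) hu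
      have hch : HasDerivAt (fun x : ℝ => Real.cosh (lam * x + c)) (Real.sinh u * lam) x :=
        HasDerivAt.comp (h₂ := Real.cosh) x (Real.hasDerivAt_cosh u) hu
      have hcne : Real.cosh u ≠ 0 := (Real.cosh_pos u).ne'
      have hdiv := (hs.div hch hcne).const_mul lam
      refine HasDerivAt.congr_deriv hdiv ?_
      have hid : Real.cosh u ^ 2 - Real.sinh u ^ 2 = 1 := Real.cosh_sq_sub_sinh_sq u
      change lam * ((Real.cosh u * lam * Real.cosh u - Real.sinh u * (Real.sinh u * lam)) / Real.cosh u ^ 2) = (lam / Real.cosh u)^2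
      field_simp
      nlinarith [Real.cosh_pos u]
    have hpos : ∀ x ∈ Ioi (0:ℝ), 0 ≤ (lam / Real.cosh (lam * x + c))^2 :=
      fun x _ => sq_nonneg _
    have hlim : Tendsto (fun x => lam * (Real.sinh (lam * x + c) / Real.cosh (lam * x + c)))
        atTop (𝓝 (lam * 1)) := by
      apply Tendsto.const_mul
      apply tanh_lim.comp
      apply tendsto_atTop_add_const_right
      exact tendsto_id.const_mul_atTop hlam
    have := integral_Ioi_of_hasDerivAt_of_nonneg' hderiv hpos hlim
    rw [this]
    simp only [mul_zero, zero_add, htanh]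
    field_simp
  rw [key]
end

section
/- Let H₀ be the 2×2 matrix differential operator H₀ = diag(−∂ₓ² + 1, ∂ₓ² − 1) + sech²(x) · [[−4, −2],[2, 4]]. Then for every real k, the vector-valued function Ψ₊(x,k) = [ (tanh x − ik)², −sech² x ]ᵀ e^{ikx} satisfies H₀ Ψ₊ = (k² + 1) Ψ₊. -/
open Complex

noncomputable def T : ℝ → ℂ := fun y => (Real.tanh y : ℂ)

lemma hT (y : ℝ) : HasDerivAt T (1 - T y ^ 2) y := by
  have h2 : HasDerivAt (fun z : ℝ => Real.tanh z)
      ((Real.cosh y * Real.cosh y - Real.sinh y * Real.sinh y) / Real.cosh y ^ 2) y := by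
    simpa [Real.tanh_eq_sinh_div_cosh] using ((Real.hasDerivAt_sinh y).fun_div (Real.hasDerivAt_cosh y)
      (Real.cosh_pos (x := y)).ne')
  have := h2.ofReal_comp
  convert this using 1
  · rfl
  have hc : (Real.cosh y : ℂ) ≠ 0 := by
    exact_mod_cast (Real.cosh_pos (x := y)).ne'
  have key : Complex.cosh y ^ 2 - Complex.sinh y ^ 2 = 1 := Complex.cosh_sq_sub_sinh_sq y
  have hinv : Complex.cosh y ^ 2 * ((Complex.cosh y)⁻¹) ^ 2 = 1 := by
    rw [← mul_pow, mul_inv_cancel₀ (by push_cast at hc ⊢; exact hc)]; ring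
  simp only [T, Real.tanh_eq_sinh_div_cosh]
  push_cast
  field_simp
  linear_combination -hinv

lemma hsech (y : ℝ) : ((1 / Real.cosh y : ℝ) : ℂ) ^ 2 = 1 - T y ^ 2 := by
  have hc := (Real.cosh_pos (x := y)).ne'
  have key := Real.cosh_sq_sub_sinh_sq y
  have hre : (1 / Real.cosh y) ^ 2 = 1 - Real.tanh y ^ 2 := by
    rw [Real.tanh_eq_sinh_div_cosh]
    field_simp
    linarith
  simp only [T]
  exact_mod_cast hre

noncomputable def E (k : ℝ) : ℝ → ℂ := fun y => Complex.exp (Complex.I * k * y)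

lemma hE (k y : ℝ) : HasDerivAt (E k) (Complex.I * k * E k y) y := by
  have h1 : HasDerivAt (fun z : ℝ => Complex.I * k * (z : ℂ)) (Complex.I * k) y := by
    simpa using (Complex.ofRealCLM.hasDerivAt (x := y)).const_mul (Complex.I * k)
  have := h1.cexp
  convert this using 1 <;> try rfl
  simp [E]; ring

noncomputable def ψ1' (k : ℝ) : ℝ → ℂ := fun y =>
  (2 * (T y - Complex.I * k) * (1 - T y ^ 2) + Complex.I * k * (T y - Complex.I * k) ^ 2) * E k y

lemma hψ1 (k y : ℝ) :
    HasDerivAt (fun y => ((Real.tanh y : ℂ) - Complex.I * k) ^ 2 * Complex.exp (Complex.I * k * y))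
      (ψ1' k y) y := by
  have hf := (hT y).sub_const (Complex.I * (k:ℂ))
  have hp : HasDerivAt (fun y : ℝ => ((Real.tanh y : ℂ) - Complex.I * k) ^ 2)
      ((1 - T y ^ 2) * (T y - Complex.I * k) + (T y - Complex.I * k) * (1 - T y ^ 2)) y := by
    simpa only [pow_two, T] using hf.fun_mul hf
  have := hp.fun_mul (hE k y)
  convert this using 1 <;> try rfl
  simp only [ψ1', E, T]
  push_cast
  ring

lemma hψ1d (k y : ℝ) :
    HasDerivAt (ψ1' k)
      (((2 * (1 - T y ^ 2) - 4 * T y * (T y - Complex.I * k)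
          + 2 * Complex.I * k * (T y - Complex.I * k)) * (1 - T y ^ 2)
        + Complex.I * k * (2 * (T y - Complex.I * k) * (1 - T y ^ 2)
          + Complex.I * k * (T y - Complex.I * k) ^ 2)) * E k y) y := by
  have hf := (hT y).sub_const (Complex.I * (k:ℂ))
  have hg : HasDerivAt (fun y : ℝ => 1 - T y ^ 2)
      (-((1 - T y ^ 2) * T y + T y * (1 - T y ^ 2))) y := by
    simpa only [pow_two] using ((hT y).fun_mul (hT y)).const_sub 1
  have h1 := (hf.const_mul (2:ℂ)).fun_mul hg
  have h2 : HasDerivAt (fun y : ℝ => Complex.I * k * (T y - Complex.I * k) ^ 2)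
      (Complex.I * k * ((1 - T y ^ 2) * (T y - Complex.I * k)
        + (T y - Complex.I * k) * (1 - T y ^ 2))) y := by
    simpa only [pow_two] using (hf.fun_mul hf).const_mul (Complex.I * (k:ℂ))
  have := ((h1.fun_add h2).fun_mul (hE k y))
  convert this using 1 <;> try rfl
  ring

noncomputable def ψ2' (k : ℝ) : ℝ → ℂ := fun y =>
  (2 * T y * (1 - T y ^ 2) - Complex.I * k * (1 - T y ^ 2)) * E k y

lemma hψ2 (k y : ℝ) :
    HasDerivAt (fun y : ℝ => -(1 - T y ^ 2) * E k y) (ψ2' k y) y := by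
  have hq : HasDerivAt (fun y : ℝ => -(1 - T y ^ 2))
      ((1 - T y ^ 2) * T y + T y * (1 - T y ^ 2)) y := by
    simpa only [pow_two, neg_neg] using (((hT y).fun_mul (hT y)).const_sub 1).fun_neg
  have := hq.fun_mul (hE k y)
  convert this using 1 <;> try rfl
  simp only [ψ2']; ring

lemma hψ2d (k y : ℝ) :
    HasDerivAt (ψ2' k)
      (((2 * (1 - T y ^ 2)) * (1 - T y ^ 2)
        + (2 * T y - Complex.I * k) * (-((1 - T y ^ 2) * T y + T y * (1 - T y ^ 2)))
        + Complex.I * k * (2 * T y - Complex.I * k) * (1 - T y ^ 2)) * E k y) y := by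
  have hf := ((hT y).const_mul (2:ℂ)).sub_const (Complex.I * (k:ℂ))
  have hg : HasDerivAt (fun y : ℝ => 1 - T y ^ 2)
      (-((1 - T y ^ 2) * T y + T y * (1 - T y ^ 2))) y := by
    simpa only [pow_two] using ((hT y).fun_mul (hT y)).const_sub 1
  have := (hf.fun_mul hg).fun_mul (hE k y)
  convert this using 1
  · rfl
  · funext z; simp only [ψ2']; ring
  · ring

/-- Kaup's generalized eigenfunction: with
`Ψ₊(x,k) = [ (tanh x − ik)², −sech² x ]ᵀ e^{ikx}`, one has `H₀ Ψ₊ = (k²+1) Ψ₊`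
componentwise, where
`H₀ = diag(−∂ₓ²+1, ∂ₓ²−1) + sech²x·[[−4,−2],[2,4]]`. -/
theorem stmt5 (k x : ℝ) :
    let sech : ℝ → ℝ := fun y => 1 / Real.cosh y
    let ψ1 : ℝ → ℂ := fun y =>
      ((Real.tanh y : ℂ) - Complex.I * k)^2 * Complex.exp (Complex.I * k * y)
    let ψ2 : ℝ → ℂ := fun y =>
      -((sech y : ℂ))^2 * Complex.exp (Complex.I * k * y)
    (-(deriv (deriv ψ1) x) + ψ1 x - 4 * (sech x : ℂ)^2 * ψ1 x - 2 * (sech x : ℂ)^2 * ψ2 x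
        = ((k:ℂ)^2 + 1) * ψ1 x) ∧
    (deriv (deriv ψ2) x - ψ2 x + 2 * (sech x : ℂ)^2 * ψ1 x + 4 * (sech x : ℂ)^2 * ψ2 x
        = ((k:ℂ)^2 + 1) * ψ2 x) := by
  intro sech ψ1 ψ2
  have hψ2eq : ψ2 = fun y : ℝ => -(1 - T y ^ 2) * E k y := by
    funext y
    simp only [ψ2, sech, E]
    rw [hsech]
  have e1 : deriv ψ1 = ψ1' k := funext fun y => (hψ1 k y).deriv
  have e2 : deriv ψ2 = ψ2' k := by
    rw [hψ2eq]; exact funext fun y => (hψ2 k y).deriv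
  have d1 := (hψ1d k x).deriv
  have d2 := (hψ2d k x).deriv
  have hk : ((k:ℂ)^2 + 1) = 1 - (Complex.I * k) ^ 2 := by
    rw [mul_pow, Complex.I_sq]; ring
  constructor
  · show -(deriv (deriv ψ1) x) + ψ1 x - 4 * ((sech x : ℝ):ℂ)^2 * ψ1 x
        - 2 * ((sech x : ℝ):ℂ)^2 * ψ2 x = ((k:ℂ)^2 + 1) * ψ1 x
    rw [e1, d1, hψ2eq, hk]
    simp only [ψ1, sech, hsech, T, E]
    ring
  · show deriv (deriv ψ2) x - ψ2 x + 2 * ((sech x : ℝ):ℂ)^2 * ψ1 x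
        + 4 * ((sech x : ℝ):ℂ)^2 * ψ2 x = ((k:ℂ)^2 + 1) * ψ2 x
    rw [e2, d2, hψ2eq, hk]
    simp only [ψ1, sech, hsech, T, E]
    ring
end

section
/- The function u(x) = [ tanh² x, −sech² x ]ᵀ satisfies H₀ u = u, where H₀ = diag(−∂ₓ²+1, ∂ₓ²−1) + sech²x · [[−4,−2],[2,4]]. Moreover u is bounded on ℝ but not in L²(ℝ)×L²(ℝ) (its first component tends to 1 at ±∞), i.e., it is a threshold resonance. -/
open Filter MeasureTheory


lemma hd_u1 (x : ℝ) : HasDerivAt (fun y => Real.tanh y ^ 2)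
    (2 * Real.sinh x / Real.cosh x ^ 3) x := by
  have h : (fun y => Real.tanh y ^ 2) = fun y => (Real.sinh y / Real.cosh y) ^ 2 :=
    funext fun y => by rw [Real.tanh_eq_sinh_div_cosh]
  rw [h]
  have hc := (Real.cosh_pos x).ne'
  have := ((Real.hasDerivAt_sinh x).div (Real.hasDerivAt_cosh x) hc).pow 2
  refine this.congr_deriv ?_
  have hsq := Real.cosh_sq_sub_sinh_sq x
  simp only [Pi.div_apply, Pi.pow_apply, Pi.inv_apply, Nat.cast_ofNat, Nat.add_one_sub_one]
  field_simp
  linear_combination (Real.sinh x) * hsq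

lemma hd_u2 (x : ℝ) : HasDerivAt (fun y => -(1 / Real.cosh y) ^ 2)
    (2 * Real.sinh x / Real.cosh x ^ 3) x := by
  have hc := (Real.cosh_pos x).ne'
  have := (((Real.hasDerivAt_cosh x).inv hc).pow 2).neg
  have h : (fun y => -(1 / Real.cosh y) ^ 2) = fun y => -((Real.cosh y)⁻¹) ^ 2 := by
    simp [one_div]
  rw [h]
  refine this.congr_deriv ?_
  simp only [Pi.div_apply, Pi.pow_apply, Pi.inv_apply, Nat.cast_ofNat, Nat.add_one_sub_one]
  field_simp

lemma hd_d (x : ℝ) : HasDerivAt (fun y => 2 * Real.sinh y / Real.cosh y ^ 3)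
    ((2 * Real.cosh x ^ 2 - 6 * Real.sinh x ^ 2) / Real.cosh x ^ 4) x := by
  have hc := (Real.cosh_pos x).ne'
  have := ((Real.hasDerivAt_sinh x).const_mul 2).div ((Real.hasDerivAt_cosh x).pow 3)
    (pow_ne_zero 3 hc)
  refine this.congr_deriv ?_
  simp only [Pi.div_apply, Pi.pow_apply, Pi.inv_apply, Nat.cast_ofNat, Nat.add_one_sub_one]
  field_simp
  ring

/-- The threshold resonance `u = [tanh²x, −sech²x]ᵀ` of `H₀`: `H₀u = u`,
`u` is bounded, its first component tends to `1` at `±∞`, and `u ∉ L²×L²`. -/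
theorem stmt7 :
    let sech : ℝ → ℝ := fun y => 1 / Real.cosh y
    let u1 : ℝ → ℝ := fun y => (Real.tanh y)^2
    let u2 : ℝ → ℝ := fun y => -(sech y)^2
    (∀ x, -(deriv (deriv u1) x) + u1 x - 4 * (sech x)^2 * u1 x - 2 * (sech x)^2 * u2 x = u1 x) ∧
    (∀ x, deriv (deriv u2) x - u2 x + 2 * (sech x)^2 * u1 x + 4 * (sech x)^2 * u2 x = u2 x) ∧
    (∃ C : ℝ, ∀ x, |u1 x| ≤ C ∧ |u2 x| ≤ C) ∧
    Tendsto u1 atTop (nhds 1) ∧ Tendsto u1 atBot (nhds 1) ∧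
    ¬ MemLp u1 2 volume := by
  intro sech u1 u2
  have hdd1 : ∀ x, deriv (deriv u1) x
      = (2 * Real.cosh x ^ 2 - 6 * Real.sinh x ^ 2) / Real.cosh x ^ 4 := by
    intro x
    have h : deriv u1 = fun y => 2 * Real.sinh y / Real.cosh y ^ 3 :=
      funext fun y => (hd_u1 y).deriv
    rw [h]; exact (hd_d x).deriv
  have hdd2 : ∀ x, deriv (deriv u2) x
      = (2 * Real.cosh x ^ 2 - 6 * Real.sinh x ^ 2) / Real.cosh x ^ 4 := by
    intro x
    have h : deriv u2 = fun y => 2 * Real.sinh y / Real.cosh y ^ 3 :=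
      funext fun y => (hd_u2 y).deriv
    rw [h]; exact (hd_d x).deriv
  have hu1 : u1 = fun x => 1 - (1 / Real.cosh x) ^ 2 := by
    funext x
    have hc := (Real.cosh_pos x).ne'
    have hsq := Real.cosh_sq_sub_sinh_sq x
    simp only [u1]
    rw [Real.tanh_eq_sinh_div_cosh]
    field_simp
    linarith
  have h_top : Tendsto u1 atTop (nhds 1) := by
    have hcosh : Tendsto Real.cosh atTop atTop := by
      refine tendsto_atTop_mono (fun x => ?_) (Real.tendsto_exp_atTop.atTop_div_const two_pos)
      have := Real.cosh_eq x
      nlinarith [Real.exp_pos (-x)]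
    have h0 : Tendsto (fun x => (1 / Real.cosh x) ^ 2) atTop (nhds 0) := by
      have h := hcosh.inv_tendsto_atTop
      have := h.mul h
      simpa [one_div, pow_two] using this
    rw [hu1]
    simpa using tendsto_const_nhds.sub h0
  refine ⟨?_, ?_, ⟨1, ?_⟩, h_top, ?_, ?_⟩
  · intro x
    rw [hdd1 x]
    have hc := (Real.cosh_pos x).ne'
    have hsq := Real.cosh_sq_sub_sinh_sq x
    simp only [u1, u2, sech]
    rw [Real.tanh_eq_sinh_div_cosh]
    field_simp
    linear_combination (-2) * hsq
  · intro x
    rw [hdd2 x]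
    have hc := (Real.cosh_pos x).ne'
    have hsq := Real.cosh_sq_sub_sinh_sq x
    simp only [u1, u2, sech]
    rw [Real.tanh_eq_sinh_div_cosh]
    field_simp
    linear_combination 4 * hsq
  · intro x
    have hc := Real.cosh_pos x
    have h1 := Real.one_le_cosh x
    have hsq := Real.cosh_sq_sub_sinh_sq x
    constructor
    · show |Real.tanh x ^ 2| ≤ 1
      rw [abs_of_nonneg (sq_nonneg _), Real.tanh_eq_sinh_div_cosh, div_pow,
        div_le_one (by positivity)]
      nlinarith
    · show |-(1 / Real.cosh x) ^ 2| ≤ 1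
      rw [abs_neg, abs_of_nonneg (sq_nonneg _), div_pow, one_pow,
        div_le_one (by positivity)]
      nlinarith
  · have := h_top.comp tendsto_neg_atBot_atTop
    simpa [Function.comp_def, u1, Real.tanh_neg, neg_sq] using this
  · intro h
    have hint : Integrable (fun x => u1 x ^ 2) volume :=
      (memLp_two_iff_integrable_sq h.aestronglyMeasurable).1 h
    have hev : ∀ᶠ x in atTop, (1/2 : ℝ) ≤ u1 x ^ 2 := by
      filter_upwards [h_top.eventually (eventually_gt_nhds (by norm_num : (3/4 : ℝ) < 1))] with x hx
      nlinarith
    obtain ⟨N, hN⟩ := eventually_atTop.mp hev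
    have hle : volume (Set.Ici N) ≤ volume {x | (1/2 : ℝ) ≤ u1 x ^ 2} :=
      measure_mono fun x hx => hN x hx
    rw [Real.volume_Ici] at hle
    simp only [one_div] at hle
    exact absurd (hint.measure_ge_lt_top (ε := 2⁻¹) (by norm_num))
      (by simp [top_le_iff.mp hle])
end

section
/- The function u₂(x) = (1+√2)^{−2} e^{−√2 x} [ −sech² x, (tanh x + √2)² ]ᵀ satisfies H₀ u₂ = u₂, where H₀ = diag(−∂ₓ²+1, ∂ₓ²−1) + sech²x · [[−4,−2],[2,4]]. Moreover e^{√2 x} u₂(x) → (1+√2)^{−2}[0, (√2−1)²]ᵀ as x → −∞, so u₂ is unbounded on ℝ. -/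
open Filter Real

private lemma d1 (a s x : ℝ) :
    HasDerivAt (fun x => a * Real.exp (-s*x) * (-(1/Real.cosh x)^2))
      (a * Real.exp (-s*x) * (s * (Real.cosh x)⁻¹^2 + 2*Real.sinh x*(Real.cosh x)⁻¹^3)) x := by
  have hc : Real.cosh x ≠ 0 := (Real.cosh_pos x).ne'
  have hE : HasDerivAt (fun x => a * Real.exp (-s*x)) (a * (Real.exp (-s*x) * -s)) x := by
    exact (((hasDerivAt_id x).const_mul (-s)).congr_deriv (by ring)).exp.const_mul a
  have hq : HasDerivAt (fun x => -(1/Real.cosh x)^2)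
      (-(2 * (1/Real.cosh x)^1 * (-Real.sinh x / Real.cosh x ^ 2))) x := by
    have h0 : HasDerivAt (fun x => 1/Real.cosh x) (-Real.sinh x / Real.cosh x ^ 2) x := by
      have h := (Real.hasDerivAt_cosh x).inv hc
      simp only [one_div]
      exact h
    exact (h0.pow 2).neg
  have := hE.mul hq
  refine this.congr_deriv ?_
  field_simp

private lemma d1' (a s x : ℝ) :
    HasDerivAt (fun x => a * Real.exp (-s*x) * (s * (Real.cosh x)⁻¹^2 + 2*Real.sinh x*(Real.cosh x)⁻¹^3))
      (a * Real.exp (-s*x) * ((2 - s^2) * (Real.cosh x)⁻¹^2 - 4*s*Real.sinh x*(Real.cosh x)⁻¹^3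
        - 6*(Real.sinh x)^2*(Real.cosh x)⁻¹^4)) x := by
  have hc : Real.cosh x ≠ 0 := (Real.cosh_pos x).ne'
  have hE : HasDerivAt (fun x => a * Real.exp (-s*x)) (a * (Real.exp (-s*x) * -s)) x :=
    (((hasDerivAt_id x).const_mul (-s)).congr_deriv (by ring)).exp.const_mul a
  have hinv : HasDerivAt (fun x => (Real.cosh x)⁻¹) (-Real.sinh x / Real.cosh x ^ 2) x :=
    (Real.hasDerivAt_cosh x).inv hc
  have h1 : HasDerivAt (fun x => s * (Real.cosh x)⁻¹^2)
      (s * (2 * (Real.cosh x)⁻¹^1 * (-Real.sinh x / Real.cosh x ^ 2))) x :=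
    (hinv.pow 2).const_mul s
  have h2 : HasDerivAt (fun x => 2*Real.sinh x*(Real.cosh x)⁻¹^3)
      (2 * (Real.cosh x * (Real.cosh x)⁻¹^3 + Real.sinh x * (3 * (Real.cosh x)⁻¹^2 * (-Real.sinh x / Real.cosh x ^ 2)))) x := by
    have := ((Real.hasDerivAt_sinh x).mul (hinv.pow 3)).const_mul 2
    convert this using 2 <;> (try simp only [Pi.mul_apply, Pi.pow_apply]) <;> first | ring | rfl
  have := hE.mul (h1.add h2)
  refine this.congr_deriv ?_
  simp only [Pi.add_apply, Pi.mul_apply, Pi.pow_apply]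
  field_simp
  ring

private lemma d2 (a s x : ℝ) :
    HasDerivAt (fun x => a * Real.exp (-s*x) * (Real.tanh x + s)^2)
      (a * Real.exp (-s*x) * (-s*(Real.tanh x + s)^2 + 2*(Real.tanh x + s)*(Real.cosh x)⁻¹^2)) x := by
  have hc : Real.cosh x ≠ 0 := (Real.cosh_pos x).ne'
  have hc2 : Real.cosh x ^ 2 = Real.sinh x ^ 2 + 1 := Real.cosh_sq x
  simp only [Real.tanh_eq_sinh_div_cosh]
  have hE : HasDerivAt (fun x => a * Real.exp (-s*x)) (a * (Real.exp (-s*x) * -s)) x :=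
    (((hasDerivAt_id x).const_mul (-s)).congr_deriv (by ring)).exp.const_mul a
  have hq : HasDerivAt (fun x => Real.sinh x / Real.cosh x + s)
      ((Real.cosh x * Real.cosh x - Real.sinh x * Real.sinh x) / Real.cosh x ^ 2) x :=
    ((Real.hasDerivAt_sinh x).div (Real.hasDerivAt_cosh x) hc).add_const s
  have := hE.mul (hq.pow 2)
  refine this.congr_deriv ?_
  simp only [Pi.pow_apply, Nat.cast_ofNat, Nat.add_one_sub_one, pow_one]
  field_simp
  linear_combination (2*a*(Real.sinh x + Real.cosh x * s)) * hc2

private lemma d2' (a s x : ℝ) :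
    HasDerivAt (fun x => a * Real.exp (-s*x) * (-s*(Real.tanh x + s)^2 + 2*(Real.tanh x + s)*(Real.cosh x)⁻¹^2))
      (a * Real.exp (-s*x) * (s^2*(Real.tanh x+s)^2 - 4*s*(Real.tanh x+s)*(Real.cosh x)⁻¹^2
        + 2*(Real.cosh x)⁻¹^4 - 4*(Real.tanh x+s)*Real.sinh x*(Real.cosh x)⁻¹^3)) x := by
  have hc : Real.cosh x ≠ 0 := (Real.cosh_pos x).ne'
  have hc2 : Real.cosh x ^ 2 = Real.sinh x ^ 2 + 1 := Real.cosh_sq x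
  simp only [Real.tanh_eq_sinh_div_cosh]
  have hE : HasDerivAt (fun x => a * Real.exp (-s*x)) (a * (Real.exp (-s*x) * -s)) x :=
    (((hasDerivAt_id x).const_mul (-s)).congr_deriv (by ring)).exp.const_mul a
  have hinv : HasDerivAt (fun x => (Real.cosh x)⁻¹) (-Real.sinh x / Real.cosh x ^ 2) x :=
    (Real.hasDerivAt_cosh x).inv hc
  have hq : HasDerivAt (fun x => Real.sinh x / Real.cosh x + s)
      ((Real.cosh x * Real.cosh x - Real.sinh x * Real.sinh x) / Real.cosh x ^ 2) x :=
    ((Real.hasDerivAt_sinh x).div (Real.hasDerivAt_cosh x) hc).add_const s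
  have h1 := (hq.pow 2).const_mul (-s)
  have h2 := (hq.mul (hinv.pow 2)).const_mul 2
  have := hE.mul (h1.add h2)
  refine (this.congr_deriv ?_).congr_of_eventuallyEq (Filter.Eventually.of_forall fun y => ?_)
  rotate_left
  · simp only [Pi.add_apply, Pi.mul_apply, Pi.pow_apply]; ring
  simp only [Pi.add_apply, Pi.mul_apply, Pi.pow_apply, Nat.cast_ofNat, Nat.add_one_sub_one, pow_one]
  field_simp
  linear_combination (a*(2 - 2*s*Real.cosh x*(Real.sinh x + s*Real.cosh x))) * hc2

private lemma sech_eq (x : ℝ) : 1 / Real.cosh x = 2 * Real.exp x / ((Real.exp x)^2 + 1) := by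
  rw [Real.cosh_eq]
  rw [Real.exp_neg]
  have h := Real.exp_ne_zero x
  have h2 : (Real.exp x)^2 + 1 ≠ 0 := by positivity
  field_simp

private lemma tanh_eq' (x : ℝ) : Real.tanh x = ((Real.exp x)^2 - 1) / ((Real.exp x)^2 + 1) := by
  rw [Real.tanh_eq_sinh_div_cosh, Real.sinh_eq, Real.cosh_eq, Real.exp_neg]
  have h := Real.exp_ne_zero x
  have hc : Real.cosh x ≠ 0 := (Real.cosh_pos x).ne'
  have h2 : (Real.exp x)^2 + 1 ≠ 0 := by positivity
  have h3 : Real.exp x + (Real.exp x)⁻¹ ≠ 0 := by positivity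
  field_simp

private lemma tendsto_sech : Filter.Tendsto (fun x => 1 / Real.cosh x) Filter.atBot (nhds 0) := by
  have hcont : Continuous (fun t : ℝ => 2 * t / (t^2 + 1)) := by
    apply Continuous.div (by continuity) (by continuity)
    intro t; positivity
  have h := (hcont.tendsto 0).comp Real.tendsto_exp_atBot
  have heq : (fun x => 1 / Real.cosh x) = (fun t : ℝ => 2 * t / (t^2 + 1)) ∘ Real.exp :=
    funext fun x => by simp only [Function.comp_apply]; exact sech_eq x
  rw [heq]
  convert h using 2
  norm_num

private lemma tendsto_tanh : Filter.Tendsto Real.tanh Filter.atBot (nhds (-1)) := by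
  have hcont : Continuous (fun t : ℝ => (t^2 - 1) / (t^2 + 1)) := by
    apply Continuous.div (by continuity) (by continuity)
    intro t; positivity
  have h := (hcont.tendsto 0).comp Real.tendsto_exp_atBot
  have heq : Real.tanh = (fun t : ℝ => (t^2 - 1) / (t^2 + 1)) ∘ Real.exp :=
    funext fun x => by simp only [Function.comp_apply]; exact tanh_eq' x
  rw [heq]
  convert h using 2
  norm_num

private lemma neg_one_lt_tanh (x : ℝ) : -1 < Real.tanh x := by
  rw [Real.tanh_eq_sinh_div_cosh, lt_div_iff₀ (Real.cosh_pos x)]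
  nlinarith [Real.cosh_add_sinh x, Real.exp_pos x]

private lemma one_lt_sqrt2 : 1 < Real.sqrt 2 := by
  rw [show (1:ℝ) = Real.sqrt 1 by simp]
  exact Real.sqrt_lt_sqrt (by norm_num) (by norm_num)

open Filter

set_option maxHeartbeats 1000000 in
/-- The second solution `u₂ = (1+√2)⁻² e^{−√2 x} [−sech²x, (tanh x + √2)²]ᵀ`
satisfies `H₀u₂ = u₂`, `e^{√2 x}u₂` has the stated limits as `x → −∞`, and
`u₂` is unbounded on `ℝ`. -/
theorem stmt8 :
    let sech : ℝ → ℝ := fun y => 1 / Real.cosh y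
    let f1 : ℝ → ℝ := fun x =>
      (1 + Real.sqrt 2)⁻¹ ^ 2 * Real.exp (-(Real.sqrt 2) * x) * (-(sech x)^2)
    let f2 : ℝ → ℝ := fun x =>
      (1 + Real.sqrt 2)⁻¹ ^ 2 * Real.exp (-(Real.sqrt 2) * x) * (Real.tanh x + Real.sqrt 2)^2
    (∀ x, -(deriv (deriv f1) x) + f1 x - 4 * (sech x)^2 * f1 x - 2 * (sech x)^2 * f2 x = f1 x) ∧
    (∀ x, deriv (deriv f2) x - f2 x + 2 * (sech x)^2 * f1 x + 4 * (sech x)^2 * f2 x = f2 x) ∧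
    Tendsto (fun x => Real.exp (Real.sqrt 2 * x) * f1 x) atBot (nhds 0) ∧
    Tendsto (fun x => Real.exp (Real.sqrt 2 * x) * f2 x) atBot
      (nhds ((1 + Real.sqrt 2)⁻¹ ^ 2 * (Real.sqrt 2 - 1)^2)) ∧
    (∀ C : ℝ, ∃ x : ℝ, C < |f2 x|) := by
  intro sech f1 f2
  have hs2 : Real.sqrt 2 ^ 2 = 2 := Real.sq_sqrt (by norm_num)
  have hs1 : 1 < Real.sqrt 2 := one_lt_sqrt2
  have hapos : (0:ℝ) < (1 + Real.sqrt 2)⁻¹ ^ 2 := by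
    have : (0:ℝ) < 1 + Real.sqrt 2 := by linarith
    positivity
  have hd1 : deriv f1 = fun x => (1 + Real.sqrt 2)⁻¹ ^ 2 * Real.exp (-(Real.sqrt 2)*x) *
      (Real.sqrt 2 * (Real.cosh x)⁻¹^2 + 2*Real.sinh x*(Real.cosh x)⁻¹^3) :=
    funext fun x => (d1 ((1 + Real.sqrt 2)⁻¹ ^ 2) (Real.sqrt 2) x).deriv
  have hdd1 : ∀ x, deriv (deriv f1) x = (1 + Real.sqrt 2)⁻¹ ^ 2 * Real.exp (-(Real.sqrt 2)*x) *
      ((2 - Real.sqrt 2^2) * (Real.cosh x)⁻¹^2 - 4*Real.sqrt 2*Real.sinh x*(Real.cosh x)⁻¹^3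
        - 6*(Real.sinh x)^2*(Real.cosh x)⁻¹^4) := fun x => by
    rw [hd1]; exact (d1' ((1 + Real.sqrt 2)⁻¹ ^ 2) (Real.sqrt 2) x).deriv
  have hd2 : deriv f2 = fun x => (1 + Real.sqrt 2)⁻¹ ^ 2 * Real.exp (-(Real.sqrt 2)*x) *
      (-(Real.sqrt 2)*(Real.tanh x + Real.sqrt 2)^2
        + 2*(Real.tanh x + Real.sqrt 2)*(Real.cosh x)⁻¹^2) :=
    funext fun x => (d2 ((1 + Real.sqrt 2)⁻¹ ^ 2) (Real.sqrt 2) x).deriv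
  have hdd2 : ∀ x, deriv (deriv f2) x = (1 + Real.sqrt 2)⁻¹ ^ 2 * Real.exp (-(Real.sqrt 2)*x) *
      (Real.sqrt 2^2*(Real.tanh x+Real.sqrt 2)^2
        - 4*Real.sqrt 2*(Real.tanh x+Real.sqrt 2)*(Real.cosh x)⁻¹^2
        + 2*(Real.cosh x)⁻¹^4
        - 4*(Real.tanh x+Real.sqrt 2)*Real.sinh x*(Real.cosh x)⁻¹^3) := fun x => by
    rw [hd2]; exact (d2' ((1 + Real.sqrt 2)⁻¹ ^ 2) (Real.sqrt 2) x).deriv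
  refine ⟨?_, ?_, ?_, ?_, ?_⟩
  · intro x
    rw [hdd1 x]
    show -_ + (1 + Real.sqrt 2)⁻¹ ^ 2 * Real.exp (-(Real.sqrt 2)*x) * (-(1/Real.cosh x)^2)
        - 4 * (1/Real.cosh x)^2 * ((1 + Real.sqrt 2)⁻¹ ^ 2 * Real.exp (-(Real.sqrt 2)*x) * (-(1/Real.cosh x)^2))
        - 2 * (1/Real.cosh x)^2 * ((1 + Real.sqrt 2)⁻¹ ^ 2 * Real.exp (-(Real.sqrt 2)*x) * (Real.tanh x + Real.sqrt 2)^2)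
        = (1 + Real.sqrt 2)⁻¹ ^ 2 * Real.exp (-(Real.sqrt 2)*x) * (-(1/Real.cosh x)^2)
    have hc : Real.cosh x ≠ 0 := (Real.cosh_pos x).ne'
    have hc2 : Real.cosh x ^ 2 = Real.sinh x ^ 2 + 1 := Real.cosh_sq x
    rw [Real.tanh_eq_sinh_div_cosh]
    set s := Real.sqrt 2 with hsdef
    set a := (1+s)⁻¹^2 with hadef
    field_simp
    linear_combination (-4)*hc2
      + (-(Real.cosh x^2))*hs2
  · intro x
    rw [hdd2 x]
    show _ - (1 + Real.sqrt 2)⁻¹ ^ 2 * Real.exp (-(Real.sqrt 2)*x) * (Real.tanh x + Real.sqrt 2)^2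
        + 2 * (1/Real.cosh x)^2 * ((1 + Real.sqrt 2)⁻¹ ^ 2 * Real.exp (-(Real.sqrt 2)*x) * (-(1/Real.cosh x)^2))
        + 4 * (1/Real.cosh x)^2 * ((1 + Real.sqrt 2)⁻¹ ^ 2 * Real.exp (-(Real.sqrt 2)*x) * (Real.tanh x + Real.sqrt 2)^2)
        = (1 + Real.sqrt 2)⁻¹ ^ 2 * Real.exp (-(Real.sqrt 2)*x) * (Real.tanh x + Real.sqrt 2)^2
    have hc : Real.cosh x ≠ 0 := (Real.cosh_pos x).ne'
    have hc2 : Real.cosh x ^ 2 = Real.sinh x ^ 2 + 1 := Real.cosh_sq x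
    rw [Real.tanh_eq_sinh_div_cosh]
    field_simp
    try simp only [neg_mul]
    linear_combination (Real.cosh x^4*Real.sqrt 2^2 + 2*Real.cosh x^3*Real.sinh x*Real.sqrt 2 + Real.cosh x^2*Real.sinh x^2)*hs2
  · have key : (fun x => Real.exp (Real.sqrt 2 * x) * f1 x)
        = fun x => (1 + Real.sqrt 2)⁻¹ ^ 2 * (-(1/Real.cosh x)^2) := by
      funext x
      show Real.exp (Real.sqrt 2 * x) * ((1 + Real.sqrt 2)⁻¹ ^ 2 * Real.exp (-(Real.sqrt 2)*x) * (-(1/Real.cosh x)^2)) = _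
      have h1 : Real.exp (Real.sqrt 2 * x) * Real.exp (-(Real.sqrt 2)*x) = 1 := by
        rw [← Real.exp_add, show Real.sqrt 2 * x + -(Real.sqrt 2)*x = 0 by ring, Real.exp_zero]
      calc Real.exp (Real.sqrt 2 * x) * ((1 + Real.sqrt 2)⁻¹ ^ 2 * Real.exp (-(Real.sqrt 2)*x) * (-(1/Real.cosh x)^2))
          = (1 + Real.sqrt 2)⁻¹ ^ 2 * (-(1/Real.cosh x)^2) * (Real.exp (Real.sqrt 2 * x) * Real.exp (-(Real.sqrt 2)*x)) := by ring
        _ = _ := by rw [h1, mul_one]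
    rw [key]
    have hcont : Continuous (fun y : ℝ => (1 + Real.sqrt 2)⁻¹ ^ 2 * (-(y)^2)) := continuous_const.mul (continuous_pow 2).neg
    have h := (hcont.tendsto 0).comp tendsto_sech
    simp only [Function.comp_def] at h
    convert h using 2
    norm_num
  · have key : (fun x => Real.exp (Real.sqrt 2 * x) * f2 x)
        = fun x => (1 + Real.sqrt 2)⁻¹ ^ 2 * ((Real.tanh x + Real.sqrt 2)^2) := by
      funext x
      show Real.exp (Real.sqrt 2 * x) * ((1 + Real.sqrt 2)⁻¹ ^ 2 * Real.exp (-(Real.sqrt 2)*x) * (Real.tanh x + Real.sqrt 2)^2) = _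
      have h1 : Real.exp (Real.sqrt 2 * x) * Real.exp (-(Real.sqrt 2)*x) = 1 := by
        rw [← Real.exp_add, show Real.sqrt 2 * x + -(Real.sqrt 2)*x = 0 by ring, Real.exp_zero]
      calc Real.exp (Real.sqrt 2 * x) * ((1 + Real.sqrt 2)⁻¹ ^ 2 * Real.exp (-(Real.sqrt 2)*x) * (Real.tanh x + Real.sqrt 2)^2)
          = (1 + Real.sqrt 2)⁻¹ ^ 2 * (Real.tanh x + Real.sqrt 2)^2 * (Real.exp (Real.sqrt 2 * x) * Real.exp (-(Real.sqrt 2)*x)) := by ring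
        _ = _ := by rw [h1, mul_one]
    rw [key]
    have hcont : Continuous (fun y : ℝ => (1 + Real.sqrt 2)⁻¹ ^ 2 * ((y + Real.sqrt 2)^2)) := continuous_const.mul ((continuous_id.add continuous_const).pow 2)
    have h := (hcont.tendsto (-1)).comp tendsto_tanh
    simp only [Function.comp_def] at h
    convert h using 2
    ring
  · intro C
    have hKpos : (0:ℝ) < (1 + Real.sqrt 2)⁻¹ ^ 2 * (Real.sqrt 2 - 1)^2 := by
      have h2 : (0:ℝ) < Real.sqrt 2 - 1 := by linarith
      positivity
    have hmono : Tendsto (fun x : ℝ => -(Real.sqrt 2)*x) atBot atTop := by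
      have h1 : Tendsto (fun x : ℝ => Real.sqrt 2 * x) atBot atBot :=
        Tendsto.const_mul_atBot (by linarith) tendsto_id
      have h2 := tendsto_neg_atBot_atTop.comp h1
      simpa [Function.comp_def] using h2
    have hK : Tendsto (fun x => (1 + Real.sqrt 2)⁻¹ ^ 2 * (Real.sqrt 2 - 1)^2 * Real.exp (-(Real.sqrt 2)*x))
        atBot atTop := by
      exact Tendsto.const_mul_atTop hKpos (Real.tendsto_exp_atTop.comp hmono)
    obtain ⟨x, hx⟩ := (hK.eventually (eventually_gt_atTop C)).exists
    refine ⟨x, lt_of_lt_of_le hx ?_⟩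
    have hrw : f2 x = (1 + Real.sqrt 2)⁻¹ ^ 2 * Real.exp (-(Real.sqrt 2)*x) * (Real.tanh x + Real.sqrt 2)^2 := rfl
    have htanh : -1 < Real.tanh x := _root_.neg_one_lt_tanh x
    have h1 : (Real.sqrt 2 - 1)^2 ≤ (Real.tanh x + Real.sqrt 2)^2 := by
      apply pow_le_pow_left₀ (by linarith) (by linarith)
    have hnn : 0 ≤ f2 x := by
      rw [hrw]
      have := Real.exp_pos (-(Real.sqrt 2)*x)
      positivity
    rw [abs_of_nonneg hnn, hrw]
    have := mul_le_mul_of_nonneg_left h1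
      (le_of_lt (mul_pos hapos (Real.exp_pos (-(Real.sqrt 2)*x))))
    calc (1 + Real.sqrt 2)⁻¹ ^ 2 * (Real.sqrt 2 - 1)^2 * Real.exp (-(Real.sqrt 2)*x)
        = (1 + Real.sqrt 2)⁻¹ ^ 2 * Real.exp (-(Real.sqrt 2)*x) * (Real.sqrt 2 - 1)^2 := by ring
      _ ≤ (1 + Real.sqrt 2)⁻¹ ^ 2 * Real.exp (-(Real.sqrt 2)*x) * (Real.tanh x + Real.sqrt 2)^2 := this
end

section
/- For δ > 0, ∫₀^∞ e^{i s²/2} s²/(s²+δ²) ds = ∫₀^∞ e^{i s²/2} ds − δ ∫₀^∞ e^{i δ² s²/2} /(s²+1) ds, and consequently ∫₀^∞ e^{i s²/2} s²/(s²+δ²) ds = √(π/2) e^{iπ/4} + O(δ) as δ → 0+, where ∫₀^∞ e^{is²/2} ds = √(π/2) e^{iπ/4} is the Fresnel integral. -/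
open Filter intervalIntegral

open MeasureTheory Complex


lemma fresnel_tail_bound (ε : ℝ) (hε : 0 ≤ ε) {a b : ℝ} (ha : 0 < a) (hab : a ≤ b) :
    ‖∫ s in a..b, Complex.exp ((Complex.I/2 - ε) * (s:ℂ)^2)‖ ≤ 2 / a := by
  set c : ℂ := Complex.I/2 - ε with hc
  have hcim : c.im = 1/2 := by simp [hc]
  have hc0 : c ≠ 0 := by intro h; rw [h] at hcim; simp at hcim
  set u : ℝ → ℂ := fun x => (2*c)⁻¹ * ((x:ℂ))⁻¹ with hu
  set u' : ℝ → ℂ := fun x => (2*c)⁻¹ * (-(((x:ℂ))^2)⁻¹) with hu'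
  set v : ℝ → ℂ := fun x => Complex.exp (c * (x:ℂ)^2) with hv
  set v' : ℝ → ℂ := fun x => Complex.exp (c * (x:ℂ)^2) * (c * (2*(x:ℂ))) with hv'
  have huIcc : Set.uIcc a b = Set.Icc a b := Set.uIcc_of_le hab
  have hpos : ∀ x ∈ Set.uIcc a b, 0 < x := by
    intro x hx; rw [huIcc] at hx; linarith [hx.1]
  have hud : ∀ x ∈ Set.uIcc a b, HasDerivAt u (u' x) x := by
    intro x hx
    have hx0 : (x:ℂ) ≠ 0 := by exact_mod_cast (hpos x hx).ne'
    exact ((hasDerivAt_inv hx0).comp_ofReal).const_mul _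
  have hvd : ∀ x ∈ Set.uIcc a b, HasDerivAt v (v' x) x := by
    intro x hx
    have h1 : HasDerivAt (fun y : ℝ => c * (y:ℂ)^2) (c * (2*(x:ℂ))) x := by
      have := ((hasDerivAt_pow 2 (x:ℂ)).const_mul c).comp_ofReal
      simpa [mul_comm, mul_assoc] using this
    simpa [hv'] using h1.cexp
  have hu'int : IntervalIntegrable u' MeasureTheory.volume a b := by
    apply ContinuousOn.intervalIntegrable
    apply ContinuousOn.mul continuousOn_const
    apply ContinuousOn.neg
    apply ContinuousOn.inv₀ (Continuous.continuousOn (by fun_prop))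
    intro x hx
    have : (x:ℂ) ≠ 0 := by exact_mod_cast (hpos x hx).ne'
    simpa using pow_ne_zero 2 this
  have hv'int : IntervalIntegrable v' MeasureTheory.volume a b :=
    Continuous.intervalIntegrable (by fun_prop) _ _
  have key : ∫ x in a..b, u x * v' x = u b * v b - u a * v a - ∫ x in a..b, u' x * v x :=
    intervalIntegral.integral_mul_deriv_eq_deriv_mul hud hvd hu'int hv'int
  have heq : ∫ s in a..b, Complex.exp (c * (s:ℂ)^2) = ∫ x in a..b, u x * v' x := by
    apply intervalIntegral.integral_congr
    intro x hx
    have hx0 : (x:ℂ) ≠ 0 := by exact_mod_cast (hpos x hx).ne'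
    show Complex.exp (c * (x:ℂ)^2) = u x * v' x
    have h2c0 : (2*c) ≠ 0 := mul_ne_zero two_ne_zero hc0
    have : u x * v' x = (Complex.exp (c * (x:ℂ)^2)) * (((2*c)⁻¹ * (2*c)) * ((x:ℂ)⁻¹ * (x:ℂ))) := by
      rw [hu, hv']; ring
    rw [this, inv_mul_cancel₀ h2c0, inv_mul_cancel₀ hx0]
    simp
  have h2c : (1:ℝ) ≤ ‖2*c‖ := by
    have h1 : ‖2*c‖^2 = (2*c).re^2 + (2*c).im^2 := by
      rw [Complex.sq_norm, Complex.normSq_apply]; ring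
    have h2 : (2*c).im = 1 := by simp [Complex.mul_im, hcim]
    nlinarith [norm_nonneg (2*c), sq_nonneg (2*c).re]
  have hvnorm : ∀ s : ℝ, ‖v s‖ ≤ 1 := by
    intro s
    rw [hv, Complex.norm_exp]
    have h3 : (c * (s:ℂ)^2).re = -ε * s^2 := by
      have h : ((s:ℂ)^2) = ((s^2:ℝ):ℂ) := by push_cast; ring
      rw [h, Complex.mul_re, Complex.ofReal_re, Complex.ofReal_im]
      simp [hc]
    rw [h3]
    exact Real.exp_le_one_iff.2 (by nlinarith)
  have hunorm : ∀ x : ℝ, 0 < x → ‖u x‖ ≤ x⁻¹ := by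
    intro x hx
    rw [hu]
    rw [norm_mul, norm_inv, norm_inv, Complex.norm_real, Real.norm_eq_abs, abs_of_pos hx]
    have h4 : ‖(2*c)‖⁻¹ ≤ 1 := by
      rw [inv_le_one_iff₀]; right; exact h2c
    calc ‖2*c‖⁻¹ * x⁻¹ ≤ 1 * x⁻¹ := by
          apply mul_le_mul_of_nonneg_right h4 (by positivity)
      _ = x⁻¹ := one_mul _
  have hzero : (0:ℝ) ∉ Set.uIcc a b := by
    rw [huIcc]; intro h; linarith [h.1]
  have hgint : ∫ x in a..b, x ^ (-2:ℤ) = a⁻¹ - b⁻¹ := by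
    rw [integral_zpow (Or.inr ⟨by norm_num, hzero⟩)]
    norm_num
    ring
  have hgii : IntervalIntegrable (fun x : ℝ => x ^ (-2:ℤ)) MeasureTheory.volume a b := by
    apply ContinuousOn.intervalIntegrable
    apply ContinuousOn.zpow₀ continuousOn_id
    intro x hx
    exact Or.inl (hpos x hx).ne'
  have hI : ‖∫ x in a..b, u' x * v x‖ ≤ a⁻¹ - b⁻¹ := by
    have := intervalIntegral.norm_integral_le_abs_of_norm_le (f := fun x => u' x * v x)
      (g := fun x : ℝ => x ^ (-2:ℤ)) (μ := MeasureTheory.volume) ?_ hgii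
    · rw [hgint] at this
      have hba : b⁻¹ ≤ a⁻¹ := by
        apply inv_anti₀ ha hab
      rwa [_root_.abs_of_nonneg (by linarith)] at this
    · filter_upwards [MeasureTheory.ae_restrict_mem measurableSet_uIoc] with t ht
      have ht' : a < t ∧ t ≤ b := by
        rw [Set.uIoc_of_le hab] at ht; exact ⟨ht.1, ht.2⟩
      have htpos : 0 < t := lt_trans ha ht'.1
      have ht0 : (t:ℂ) ≠ 0 := by exact_mod_cast htpos.ne'
      rw [norm_mul, hu']
      calc ‖(2*c)⁻¹ * -((t:ℂ)^2)⁻¹‖ * ‖v t‖ ≤ ‖(2*c)⁻¹ * -((t:ℂ)^2)⁻¹‖ * 1 := by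
            apply mul_le_mul_of_nonneg_left (hvnorm t) (norm_nonneg _)
        _ = ‖2*c‖⁻¹ * (t^2)⁻¹ := by
            rw [mul_one, norm_mul, norm_inv, norm_neg, norm_inv]
            congr 1
            have : ((t:ℂ)^2) = ((t^2:ℝ):ℂ) := by push_cast; ring
            rw [this, Complex.norm_real, Real.norm_eq_abs, abs_of_pos (by positivity)]
        _ ≤ 1 * (t^2)⁻¹ := by
            apply mul_le_mul_of_nonneg_right _ (by positivity)
            rw [inv_le_one_iff₀]; right; exact h2c
        _ = t ^ (-2:ℤ) := by
            rw [one_mul, zpow_neg]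
            norm_num
  rw [heq, key]
  have hb : 0 < b := lt_of_lt_of_le ha hab
  calc ‖u b * v b - u a * v a - ∫ x in a..b, u' x * v x‖
      ≤ ‖u b * v b - u a * v a‖ + ‖∫ x in a..b, u' x * v x‖ := norm_sub_le _ _
    _ ≤ (‖u b * v b‖ + ‖u a * v a‖) + (a⁻¹ - b⁻¹) := by
        apply add_le_add (norm_sub_le _ _) hI
    _ ≤ (b⁻¹ * 1 + a⁻¹ * 1) + (a⁻¹ - b⁻¹) := by
        apply add_le_add _ le_rfl
        apply add_le_add
        · rw [norm_mul]
          exact mul_le_mul (hunorm b hb) (hvnorm b) (norm_nonneg _) (by positivity)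
        · rw [norm_mul]
          exact mul_le_mul (hunorm a ha) (hvnorm a) (norm_nonneg _) (by positivity)
    _ = 2 / a := by field_simp; ring

noncomputable def frI (ε : ℝ) (R : ℝ) : ℂ :=
  ∫ s in (0:ℝ)..R, Complex.exp ((Complex.I/2 - ε) * (s:ℂ)^2)

lemma frI_cont (ε : ℝ) : Continuous fun s : ℝ => Complex.exp ((Complex.I/2 - ε) * (s:ℂ)^2) := by
  fun_prop

lemma frI_ii (ε a b : ℝ) :
    IntervalIntegrable (fun s : ℝ => Complex.exp ((Complex.I/2 - ε) * (s:ℂ)^2))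
      MeasureTheory.volume a b :=
  (frI_cont ε).intervalIntegrable a b

lemma frI_sub (ε a b : ℝ) :
    frI ε b - frI ε a = ∫ s in a..b, Complex.exp ((Complex.I/2 - ε) * (s:ℂ)^2) :=
  intervalIntegral.integral_interval_sub_left (frI_ii ε 0 b) (frI_ii ε 0 a)

lemma frI_dist (ε : ℝ) (hε : 0 ≤ ε) {a b : ℝ} (ha : 0 < a) (hab : a ≤ b) :
    dist (frI ε a) (frI ε b) ≤ 2 / a := by
  rw [dist_eq_norm, norm_sub_rev, frI_sub]
  exact fresnel_tail_bound ε hε ha hab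

lemma frI_exists_lim : ∃ L : ℂ, Filter.Tendsto (frI 0) Filter.atTop (nhds L) := by
  apply cauchySeq_tendsto_of_complete
  rw [Metric.cauchySeq_iff]
  intro η hη
  refine ⟨max 1 (3/η), fun m hm n hn => ?_⟩
  have h1 : (1:ℝ) ≤ max 1 (3/η) := le_max_left _ _
  have hm1 : 0 < m := lt_of_lt_of_le one_pos (le_trans h1 hm)
  have hn1 : 0 < n := lt_of_lt_of_le one_pos (le_trans h1 hn)
  have h3 : 3/η ≤ max 1 (3/η) := le_max_right _ _
  rcases le_total m n with h | h
  · calc dist (frI 0 m) (frI 0 n) ≤ 2/m := frI_dist 0 le_rfl hm1 h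
      _ ≤ 2/(3/η) := by apply div_le_div_of_nonneg_left (by norm_num) (by positivity) (le_trans h3 hm)
      _ < η := by rw [div_div_eq_mul_div]; rw [div_lt_iff₀ (by norm_num)]; linarith
  · rw [dist_comm]
    calc dist (frI 0 n) (frI 0 m) ≤ 2/n := frI_dist 0 le_rfl hn1 h
      _ ≤ 2/(3/η) := by apply div_le_div_of_nonneg_left (by norm_num) (by positivity) (le_trans h3 hn)
      _ < η := by rw [div_div_eq_mul_div]; rw [div_lt_iff₀ (by norm_num)]; linarith

lemma frI_norm (ε : ℝ) (s : ℝ) :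
    ‖Complex.exp ((Complex.I/2 - ε) * (s:ℂ)^2)‖ = Real.exp (-ε * s^2) := by
  rw [Complex.norm_exp]
  congr 1
  have h : ((s:ℂ)^2) = ((s^2:ℝ):ℂ) := by push_cast; ring
  rw [h, Complex.mul_re, Complex.ofReal_re, Complex.ofReal_im]
  simp

lemma frI_integrableOn {ε : ℝ} (hε : 0 < ε) :
    MeasureTheory.IntegrableOn (fun s : ℝ => Complex.exp ((Complex.I/2 - ε) * (s:ℂ)^2))
      (Set.Ioi 0) MeasureTheory.volume := by
  apply MeasureTheory.Integrable.mono' ((integrable_exp_neg_mul_sq hε).restrict (s := Set.Ioi 0))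
  · exact (frI_cont ε).aestronglyMeasurable
  · filter_upwards with s
    rw [frI_norm]

lemma frI_tendsto_Ioi {ε : ℝ} (hε : 0 < ε) :
    Filter.Tendsto (frI ε) Filter.atTop
      (nhds (∫ s in Set.Ioi (0:ℝ), Complex.exp ((Complex.I/2 - ε) * (s:ℂ)^2))) :=
  MeasureTheory.intervalIntegral_tendsto_integral_Ioi 0 (frI_integrableOn hε) Filter.tendsto_id

lemma frI_lim_dist {ε : ℝ} (hε : 0 ≤ ε) {M : ℂ}
    (hM : Filter.Tendsto (frI ε) Filter.atTop (nhds M)) {R : ℝ} (hR : 0 < R) :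
    ‖M - frI ε R‖ ≤ 2 / R := by
  have h1 : Filter.Tendsto (fun b => ‖frI ε b - frI ε R‖) Filter.atTop (nhds ‖M - frI ε R‖) :=
    ((hM.sub tendsto_const_nhds).norm)
  apply le_of_tendsto h1
  filter_upwards [Filter.eventually_ge_atTop R] with b hb
  rw [frI_sub]
  exact fresnel_tail_bound ε hε hR hb

lemma frI_diff {ε : ℝ} (hε : 0 ≤ ε) {R : ℝ} (hR : 0 ≤ R) :
    ‖frI 0 R - frI ε R‖ ≤ ε * R^3 / 3 := by
  have hsub : frI 0 R - frI ε R = ∫ s in (0:ℝ)..R,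
      (Complex.exp ((Complex.I/2 - (0:ℝ)) * (s:ℂ)^2) - Complex.exp ((Complex.I/2 - ε) * (s:ℂ)^2)) := by
    rw [intervalIntegral.integral_sub (frI_ii 0 0 R) (frI_ii ε 0 R)]; rfl
  rw [hsub]
  have hbound : ∀ s ∈ Set.Ioc (0:ℝ) R,
      ‖Complex.exp ((Complex.I/2 - (0:ℝ)) * (s:ℂ)^2) - Complex.exp ((Complex.I/2 - ε) * (s:ℂ)^2)‖
        ≤ ε * s^2 := by
    intro s _
    have hsplit : Complex.exp ((Complex.I/2 - (ε:ℝ)) * (s:ℂ)^2)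
        = Complex.exp ((Complex.I/2 - (0:ℝ)) * (s:ℂ)^2) * Complex.exp (((-ε * s^2 : ℝ) : ℂ)) := by
      rw [← Complex.exp_add]; congr 1; push_cast; ring
    rw [hsplit]
    have h1 : Complex.exp ((Complex.I/2 - (0:ℝ)) * (s:ℂ)^2)
        - Complex.exp ((Complex.I/2 - (0:ℝ)) * (s:ℂ)^2) * Complex.exp (((-ε * s^2 : ℝ) : ℂ))
        = Complex.exp ((Complex.I/2 - (0:ℝ)) * (s:ℂ)^2) * (1 - Complex.exp (((-ε * s^2 : ℝ) : ℂ))) := by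
      ring
    rw [h1, norm_mul, frI_norm]
    have h2 : (1 : ℂ) - Complex.exp (((-ε * s^2 : ℝ) : ℂ)) = (((1 - Real.exp (-ε * s^2) : ℝ)) : ℂ) := by
      rw [← Complex.ofReal_exp]; push_cast; ring
    rw [h2, Complex.norm_real, Real.norm_eq_abs]
    have h3 : Real.exp (-ε * s^2) ≤ 1 := Real.exp_le_one_iff.2 (by nlinarith)
    have h4 : 1 - ε * s^2 ≤ Real.exp (-ε * s^2) := by
      have := Real.add_one_le_exp (-ε * s^2); linarith
    rw [_root_.abs_of_nonneg (by linarith)]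
    have h5 : -(0:ℝ) * s^2 = 0 := by ring
    rw [h5, Real.exp_zero, one_mul]
    linarith
  calc ‖∫ s in (0:ℝ)..R, (Complex.exp ((Complex.I/2 - (0:ℝ)) * (s:ℂ)^2)
          - Complex.exp ((Complex.I/2 - ε) * (s:ℂ)^2))‖
      ≤ |∫ s in (0:ℝ)..R, ε * s^2| := by
        apply intervalIntegral.norm_integral_le_abs_of_norm_le
        · filter_upwards [MeasureTheory.ae_restrict_mem measurableSet_uIoc] with t ht
          rw [Set.uIoc_of_le hR] at ht
          exact hbound t ht
        · exact (Continuous.intervalIntegrable (by fun_prop) _ _)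
    _ = ε * R^3 / 3 := by
        rw [intervalIntegral.integral_const_mul, integral_pow]
        norm_num
        rw [_root_.abs_of_nonneg hε, _root_.abs_of_nonneg (by positivity : (0:ℝ) ≤ R ^ 3 / 3)]
        ring

lemma frI_gauss {ε : ℝ} (hε : 0 < ε) :
    (∫ s in Set.Ioi (0:ℝ), Complex.exp ((Complex.I/2 - ε) * (s:ℂ)^2))
      = ((Real.pi : ℂ) / ((ε:ℂ) - Complex.I/2)) ^ (1/2 : ℂ) / 2 := by
  have hb : (0:ℝ) < ((ε:ℂ) - Complex.I/2).re := by simp [hε]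
  rw [← integral_gaussian_complex_Ioi hb]
  have hfun : (fun s : ℝ => Complex.exp ((Complex.I/2 - ε) * (s:ℂ)^2))
      = fun s : ℝ => Complex.exp (-((ε:ℂ) - Complex.I/2) * (s:ℂ)^2) := by
    funext s; congr 1; ring
  rw [hfun]

lemma value_eq :
    ((Real.pi : ℂ) / ((((0:ℝ)):ℂ) - Complex.I/2)) ^ (1/2 : ℂ) / 2
      = (Real.sqrt (Real.pi/2) : ℂ) * Complex.exp (Complex.I * Real.pi / 4) := by
  have h0 : ((((0:ℝ)):ℂ) - Complex.I/2) ≠ 0 := by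
    intro h
    have := congrArg Complex.im h
    simp at this
  have hbase : ((Real.pi : ℂ) / ((((0:ℝ)):ℂ) - Complex.I/2)) = 2*(Real.pi:ℂ)*Complex.I := by
    rw [div_eq_iff h0]
    push_cast
    ring_nf
    rw [Complex.I_sq]
    ring
  rw [hbase]
  have h2pi : (2*(Real.pi:ℂ)*Complex.I) = ((2*Real.pi : ℝ):ℂ) * Complex.I := by push_cast; ring
  have hne : (2*(Real.pi:ℂ)*Complex.I) ≠ 0 := by
    simp [Real.pi_ne_zero, Complex.I_ne_zero]
  rw [Complex.cpow_def_of_ne_zero hne]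
  rw [h2pi, Complex.log_ofReal_mul (by positivity) Complex.I_ne_zero, Complex.log_I]
  have hexp : ((Real.log (2*Real.pi) : ℂ) + (Real.pi:ℂ)/2*Complex.I) * (1/2 : ℂ)
      = ((Real.log (2*Real.pi)/2 : ℝ) : ℂ) + Complex.I * Real.pi / 4 := by
    push_cast; ring
  rw [hexp, Complex.exp_add, ← Complex.ofReal_exp]
  have hsq : Real.exp (Real.log (2*Real.pi)/2) = Real.sqrt (2*Real.pi) := by
    rw [← Real.log_sqrt (by positivity)]
    exact Real.exp_log (Real.sqrt_pos.2 (by positivity))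
  rw [hsq]
  have hhalf : Real.sqrt (2*Real.pi) = 2 * Real.sqrt (Real.pi/2) := by
    rw [show (2*Real.pi:ℝ) = 2^2*(Real.pi/2) by ring, Real.sqrt_mul (by positivity),
      Real.sqrt_sq (by norm_num)]
  rw [hhalf]
  push_cast
  ring

lemma fresnel_main : ∃ L : ℂ, Filter.Tendsto (frI 0) Filter.atTop (nhds L) ∧
    L = (Real.sqrt (Real.pi/2) : ℂ) * Complex.exp (Complex.I * Real.pi / 4) := by
  obtain ⟨L, hL⟩ := frI_exists_lim
  refine ⟨L, hL, ?_⟩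
  set Φ : ℝ → ℂ := fun ε => ∫ s in Set.Ioi (0:ℝ), Complex.exp ((Complex.I/2 - ε) * (s:ℂ)^2)
    with hΦ
  set Ψ : ℝ → ℂ := fun ε => ((Real.pi : ℂ) / ((ε:ℂ) - Complex.I/2)) ^ (1/2 : ℂ) / 2 with hΨ
  -- (A) Φ → L along 𝓝[>]0
  have hA : Filter.Tendsto Φ (nhdsWithin 0 (Set.Ioi 0)) (nhds L) := by
    rw [Metric.tendsto_nhdsWithin_nhds]
    intro η hη
    set R : ℝ := max 1 (8/η) with hR
    have hR0 : 0 < R := lt_of_lt_of_le one_pos (le_max_left _ _)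
    refine ⟨η/R^3, by positivity, ?_⟩
    intro ε hε hεd
    have hε0 : 0 < ε := hε
    rw [Real.dist_eq, sub_zero, abs_of_pos hε0] at hεd
    have hM := frI_tendsto_Ioi hε0
    have h1 : ‖Φ ε - frI ε R‖ ≤ 2/R := frI_lim_dist hε0.le hM hR0
    have h2 : ‖frI ε R - frI 0 R‖ ≤ ε * R^3/3 := by
      rw [norm_sub_rev]; exact frI_diff hε0.le hR0.le
    have h3 : ‖frI 0 R - L‖ ≤ 2/R := by
      rw [norm_sub_rev]; exact frI_lim_dist le_rfl hL hR0
    have hd : dist (Φ ε) L ≤ 4/R + ε * R^3/3 := by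
      calc dist (Φ ε) L = ‖(Φ ε - frI ε R) + (frI ε R - frI 0 R) + (frI 0 R - L)‖ := by
            rw [dist_eq_norm]; congr 1; ring
        _ ≤ ‖(Φ ε - frI ε R) + (frI ε R - frI 0 R)‖ + ‖frI 0 R - L‖ := norm_add_le _ _
        _ ≤ (‖Φ ε - frI ε R‖ + ‖frI ε R - frI 0 R‖) + ‖frI 0 R - L‖ := by
            exact add_le_add_left (norm_add_le _ _) _
        _ ≤ (2/R + ε*R^3/3) + 2/R := by
            apply add_le_add (add_le_add h1 h2) h3
        _ = 4/R + ε * R^3/3 := by ring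
    have hfour : 4/R ≤ η/2 := by
      have h8 : 8/η ≤ R := le_max_right _ _
      rw [div_le_iff₀ hR0]
      rw [div_le_iff₀ hη] at h8
      linarith
    have hthird : ε * R^3/3 < η/3 := by
      have : ε * R^3 < (η/R^3) * R^3 := by
        apply mul_lt_mul_of_pos_right hεd (by positivity)
      rw [div_mul_cancel₀] at this
      · linarith
      · positivity
    calc dist (Φ ε) L ≤ 4/R + ε * R^3/3 := hd
      _ < η/2 + η/3 := by apply add_lt_add_of_le_of_lt hfour hthird
      _ ≤ η := by linarith
  -- (B) Φ → Ψ 0 along 𝓝[>]0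
  have hB : Filter.Tendsto Φ (nhdsWithin 0 (Set.Ioi 0)) (nhds (Ψ 0)) := by
    have hcontΨ : ContinuousAt Ψ 0 := by
      have h0 : ((((0:ℝ)):ℂ) - Complex.I/2) ≠ 0 := by
        intro h
        have := congrArg Complex.im h
        simp at this
      have hbasecont : ContinuousAt (fun ε : ℝ => (Real.pi : ℂ) / ((ε:ℂ) - Complex.I/2)) 0 :=
        ContinuousAt.div continuousAt_const
          ((Complex.continuous_ofReal.continuousAt).sub continuousAt_const) h0
      have hslit : ((Real.pi : ℂ) / ((((0:ℝ)):ℂ) - Complex.I/2)) ∈ Complex.slitPlane := by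
        have hbase : ((Real.pi : ℂ) / ((((0:ℝ)):ℂ) - Complex.I/2)) = 2*(Real.pi:ℂ)*Complex.I := by
          rw [div_eq_iff h0]; push_cast; ring_nf; rw [Complex.I_sq]; ring
        rw [hbase, Complex.mem_slitPlane_iff]
        right
        simp [Real.pi_ne_zero]
      exact (ContinuousAt.comp (g := fun z : ℂ => z ^ (1/2:ℂ)) (x := (0:ℝ))
        (continuousAt_cpow_const (b := (1/2:ℂ)) hslit) hbasecont).div_const 2
    have hBB := hcontΨ.continuousWithinAt (s := Set.Ioi 0)
    apply Filter.Tendsto.congr' _ hBB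
    filter_upwards [self_mem_nhdsWithin] with ε hε
    exact (frI_gauss hε).symm
  have huniq : L = Ψ 0 := tendsto_nhds_unique hA hB
  rw [huniq, hΨ]
  exact value_eq

section Main
variable {δ : ℝ}

lemma hfun_norm (δ : ℝ) (u : ℝ) :
    ‖Complex.exp (Complex.I * (δ:ℂ)^2 * (u:ℂ)^2 / 2) / ((u:ℂ)^2 + 1)‖ = (1 + u^2)⁻¹ := by
  rw [norm_div]
  have h1 : Complex.I * (δ:ℂ)^2 * (u:ℂ)^2 / 2 = ((δ^2*u^2/2 : ℝ) : ℂ) * Complex.I := by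
    push_cast; ring
  have h2 : ((u:ℂ)^2 + 1) = ((u^2 + 1 : ℝ) : ℂ) := by push_cast; ring
  rw [h1, h2, Complex.norm_exp_ofReal_mul_I, Complex.norm_real,
    Real.norm_eq_abs, _root_.abs_of_pos (by positivity)]
  rw [one_div]
  ring_nf

lemma hfun_cont (δ : ℝ) :
    Continuous fun u : ℝ => Complex.exp (Complex.I * (δ:ℂ)^2 * (u:ℂ)^2 / 2) / ((u:ℂ)^2 + 1) := by
  apply Continuous.div (by fun_prop) (by fun_prop)
  intro u
  have h2 : ((u:ℂ)^2 + 1) = ((u^2 + 1 : ℝ) : ℂ) := by push_cast; ring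
  rw [h2]
  exact_mod_cast (by positivity : (0:ℝ) < u^2+1).ne'

lemma hfun_integrableOn (δ : ℝ) :
    MeasureTheory.IntegrableOn
      (fun u : ℝ => Complex.exp (Complex.I * (δ:ℂ)^2 * (u:ℂ)^2 / 2) / ((u:ℂ)^2 + 1))
      (Set.Ioi 0) MeasureTheory.volume := by
  apply MeasureTheory.Integrable.mono' (integrable_inv_one_add_sq.restrict (s := Set.Ioi 0))
  · exact (hfun_cont δ).aestronglyMeasurable
  · filter_upwards with u
    rw [hfun_norm]

lemma hfun_norm_integral (δ : ℝ) :
    ‖∫ u in Set.Ioi (0:ℝ), Complex.exp (Complex.I * (δ:ℂ)^2 * (u:ℂ)^2 / 2) / ((u:ℂ)^2 + 1)‖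
      ≤ Real.pi/2 := by
  calc ‖∫ u in Set.Ioi (0:ℝ), Complex.exp (Complex.I * (δ:ℂ)^2 * (u:ℂ)^2 / 2) / ((u:ℂ)^2 + 1)‖
      ≤ ∫ u in Set.Ioi (0:ℝ),
          ‖Complex.exp (Complex.I * (δ:ℂ)^2 * (u:ℂ)^2 / 2) / ((u:ℂ)^2 + 1)‖ :=
        MeasureTheory.norm_integral_le_integral_norm _
    _ = ∫ u in Set.Ioi (0:ℝ), (1 + u^2)⁻¹ := by
        apply MeasureTheory.setIntegral_congr_fun measurableSet_Ioi
        intro u _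
        exact hfun_norm δ u
    _ = Real.pi/2 := by rw [integral_Ioi_inv_one_add_sq, Real.arctan_zero, sub_zero]

lemma frI_zero_eq (R : ℝ) :
    (∫ s in (0:ℝ)..R, Complex.exp (Complex.I * (s:ℂ)^2/2)) = frI 0 R := by
  rw [frI]
  apply intervalIntegral.integral_congr
  intro x _
  show Complex.exp (Complex.I * (x:ℂ)^2/2) = Complex.exp ((Complex.I/2 - ((0:ℝ):ℂ)) * (x:ℂ)^2)
  congr 1
  push_cast
  ring

end Main

lemma split_integral (δ : ℝ) (hδ : 0 < δ) (R : ℝ) :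
    (∫ s in (0:ℝ)..R, Complex.exp (Complex.I * (s:ℂ)^2 / 2) * (s:ℂ)^2 / ((s:ℂ)^2 + (δ:ℂ)^2))
      = (∫ s in (0:ℝ)..R, Complex.exp (Complex.I * (s:ℂ)^2 / 2))
        - (δ:ℂ) * ∫ u in (0:ℝ)..(R/δ),
            Complex.exp (Complex.I * (δ:ℂ)^2 * (u:ℂ)^2 / 2) / ((u:ℂ)^2 + 1) := by
  have hden : ∀ s : ℝ, ((s:ℂ)^2 + (δ:ℂ)^2) ≠ 0 := by
    intro s
    have h : ((s:ℂ)^2 + (δ:ℂ)^2) = ((s^2 + δ^2 : ℝ):ℂ) := by push_cast; ring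
    rw [h]
    exact_mod_cast (by positivity : (0:ℝ) < s^2 + δ^2).ne'
  set g : ℝ → ℂ := fun s => Complex.exp (Complex.I * (s:ℂ)^2/2) * (δ:ℂ)^2 / ((s:ℂ)^2 + (δ:ℂ)^2)
    with hg
  have hgcont : Continuous g := by
    apply Continuous.div (by fun_prop) (by fun_prop)
    exact fun s => hden s
  have step1 : (∫ s in (0:ℝ)..R,
        Complex.exp (Complex.I * (s:ℂ)^2 / 2) * (s:ℂ)^2 / ((s:ℂ)^2 + (δ:ℂ)^2))
      = (∫ s in (0:ℝ)..R, Complex.exp (Complex.I * (s:ℂ)^2 / 2)) - ∫ s in (0:ℝ)..R, g s := by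
    rw [← intervalIntegral.integral_sub
      ((Continuous.intervalIntegrable (by fun_prop) _ _))
      (hgcont.intervalIntegrable _ _)]
    apply intervalIntegral.integral_congr
    intro x _
    rw [hg]
    rw [eq_sub_iff_add_eq, ← add_div, div_eq_iff (hden x)]
    ring
  have step2 : (∫ u in (0:ℝ)..(R/δ),
        Complex.exp (Complex.I * (δ:ℂ)^2 * (u:ℂ)^2 / 2) / ((u:ℂ)^2 + 1))
      = δ⁻¹ • ∫ s in (0:ℝ)..R, g s := by
    have hcomp := intervalIntegral.integral_comp_mul_left (a := (0:ℝ)) (b := R/δ) g hδ.ne'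
    have hb0 : δ * (0:ℝ) = 0 := by ring
    have hbR : δ * (R/δ) = R := by field_simp
    rw [hb0, hbR] at hcomp
    rw [← hcomp]
    apply intervalIntegral.integral_congr
    intro x _
    have hx1 : ((x:ℂ)^2 + 1) ≠ 0 := by
      have h : ((x:ℂ)^2 + 1) = ((x^2 + 1 : ℝ):ℂ) := by push_cast; ring
      rw [h]
      exact_mod_cast (by positivity : (0:ℝ) < x^2 + 1).ne'
    show Complex.exp (Complex.I * (δ:ℂ)^2 * (x:ℂ)^2 / 2) / ((x:ℂ)^2 + 1) = g (δ * x)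
    rw [hg]
    have hδc : ((δ:ℂ)) ≠ 0 := by exact_mod_cast hδ.ne'
    have hexp : Complex.I * ((δ * x : ℝ):ℂ)^2/2 = Complex.I * (δ:ℂ)^2 * (x:ℂ)^2 / 2 := by
      push_cast; ring
    show Complex.exp (Complex.I * (δ:ℂ)^2 * (x:ℂ)^2 / 2) / ((x:ℂ)^2 + 1)
        = Complex.exp (Complex.I * ((δ * x : ℝ):ℂ)^2/2) * (δ:ℂ)^2 / (((δ * x : ℝ):ℂ)^2 + (δ:ℂ)^2)
    rw [hexp]
    rw [div_eq_div_iff hx1 (by exact_mod_cast hden (δ*x))]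
    push_cast
    ring
  rw [step1, step2]
  congr 1
  rw [Complex.real_smul, ← mul_assoc, ← Complex.ofReal_mul, mul_inv_cancel₀ hδ.ne']
  simp

theorem stmt13_aux (δ : ℝ) (hδ : 0 < δ) :
    ∃ L1 L2 L3 : ℂ,
      Filter.Tendsto (fun R : ℝ => ∫ s in (0:ℝ)..R,
          Complex.exp (Complex.I * (s:ℂ)^2 / 2) * (s:ℂ)^2 / ((s:ℂ)^2 + (δ:ℂ)^2))
        Filter.atTop (nhds L1) ∧
      Filter.Tendsto (fun R : ℝ => ∫ s in (0:ℝ)..R,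
          Complex.exp (Complex.I * (s:ℂ)^2 / 2)) Filter.atTop (nhds L2) ∧
      Filter.Tendsto (fun R : ℝ => ∫ s in (0:ℝ)..R,
          Complex.exp (Complex.I * (δ:ℂ)^2 * (s:ℂ)^2 / 2) / ((s:ℂ)^2 + 1))
        Filter.atTop (nhds L3) ∧
      L1 = L2 - δ * L3 ∧
      L2 = (Real.sqrt (Real.pi / 2) : ℂ) * Complex.exp (Complex.I * Real.pi / 4) ∧
      ‖L1 - (Real.sqrt (Real.pi / 2) : ℂ) * Complex.exp (Complex.I * Real.pi / 4)‖
        ≤ (Real.pi / 2) * δ := by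
  obtain ⟨L2, hL2fr, hval⟩ := fresnel_main
  set L3 : ℂ := ∫ u in Set.Ioi (0:ℝ),
    Complex.exp (Complex.I * (δ:ℂ)^2 * (u:ℂ)^2 / 2) / ((u:ℂ)^2 + 1) with hL3def
  have hL2 : Filter.Tendsto (fun R : ℝ => ∫ s in (0:ℝ)..R,
      Complex.exp (Complex.I * (s:ℂ)^2/2)) Filter.atTop (nhds L2) := by
    have hfn : (fun R : ℝ => ∫ s in (0:ℝ)..R, Complex.exp (Complex.I * (s:ℂ)^2/2)) = frI 0 := by
      funext R; exact frI_zero_eq R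
    rw [hfn]; exact hL2fr
  have hL3 : Filter.Tendsto (fun R : ℝ => ∫ u in (0:ℝ)..R,
      Complex.exp (Complex.I * (δ:ℂ)^2 * (u:ℂ)^2 / 2) / ((u:ℂ)^2 + 1))
      Filter.atTop (nhds L3) :=
    MeasureTheory.intervalIntegral_tendsto_integral_Ioi 0 (hfun_integrableOn δ) Filter.tendsto_id
  have hdiv : Filter.Tendsto (fun R : ℝ => R/δ) Filter.atTop Filter.atTop :=
    Filter.tendsto_id.atTop_div_const hδ
  have hL3' : Filter.Tendsto (fun R : ℝ => ∫ u in (0:ℝ)..(R/δ),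
      Complex.exp (Complex.I * (δ:ℂ)^2 * (u:ℂ)^2 / 2) / ((u:ℂ)^2 + 1))
      Filter.atTop (nhds L3) := hL3.comp hdiv
  have hL1 : Filter.Tendsto (fun R : ℝ => ∫ s in (0:ℝ)..R,
      Complex.exp (Complex.I * (s:ℂ)^2 / 2) * (s:ℂ)^2 / ((s:ℂ)^2 + (δ:ℂ)^2))
      Filter.atTop (nhds (L2 - (δ:ℂ) * L3)) := by
    have hfn : (fun R : ℝ => ∫ s in (0:ℝ)..R,
        Complex.exp (Complex.I * (s:ℂ)^2 / 2) * (s:ℂ)^2 / ((s:ℂ)^2 + (δ:ℂ)^2))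
        = fun R : ℝ => (∫ s in (0:ℝ)..R, Complex.exp (Complex.I * (s:ℂ)^2 / 2))
          - (δ:ℂ) * ∫ u in (0:ℝ)..(R/δ),
              Complex.exp (Complex.I * (δ:ℂ)^2 * (u:ℂ)^2 / 2) / ((u:ℂ)^2 + 1) :=
      funext (split_integral δ hδ)
    rw [hfn]
    exact hL2.sub (hL3'.const_mul _)
  refine ⟨L2 - (δ:ℂ) * L3, L2, L3, hL1, hL2, hL3, rfl, hval, ?_⟩
  rw [← hval]
  have hrw : L2 - (δ:ℂ)*L3 - L2 = -((δ:ℂ)*L3) := by ring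
  rw [hrw, norm_neg, norm_mul]
  have hnd : ‖((δ:ℝ):ℂ)‖ = δ := by
    rw [Complex.norm_real, Real.norm_eq_abs, _root_.abs_of_pos hδ]
  rw [hnd]
  calc δ * ‖L3‖ ≤ δ * (Real.pi/2) :=
        mul_le_mul_of_nonneg_left (hfun_norm_integral δ) hδ.le
    _ = Real.pi/2 * δ := by ring


/-- Fresnel-type integral splitting: for `δ > 0`,
`∫₀^∞ e^{is²/2} s²/(s²+δ²) ds = ∫₀^∞ e^{is²/2} ds − δ ∫₀^∞ e^{iδ²s²/2}/(s²+1) ds`,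
the middle integral equals `√(π/2) e^{iπ/4}`, and the first equals
`√(π/2) e^{iπ/4} + O(δ)` with explicit constant `π/2`. -/
theorem stmt13 (δ : ℝ) (hδ : 0 < δ) :
    ∃ L1 L2 L3 : ℂ,
      Tendsto (fun R : ℝ => ∫ s in (0:ℝ)..R,
          Complex.exp (Complex.I * (s:ℂ)^2 / 2) * (s:ℂ)^2 / ((s:ℂ)^2 + (δ:ℂ)^2))
        atTop (nhds L1) ∧
      Tendsto (fun R : ℝ => ∫ s in (0:ℝ)..R,
          Complex.exp (Complex.I * (s:ℂ)^2 / 2)) atTop (nhds L2) ∧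
      Tendsto (fun R : ℝ => ∫ s in (0:ℝ)..R,
          Complex.exp (Complex.I * (δ:ℂ)^2 * (s:ℂ)^2 / 2) / ((s:ℂ)^2 + 1))
        atTop (nhds L3) ∧
      L1 = L2 - δ * L3 ∧
      L2 = (Real.sqrt (Real.pi / 2) : ℂ) * Complex.exp (Complex.I * Real.pi / 4) ∧
      ‖L1 - (Real.sqrt (Real.pi / 2) : ℂ) * Complex.exp (Complex.I * Real.pi / 4)‖
        ≤ (Real.pi / 2) * δ := by
  exact stmt13_aux δ hδ
end

section
/- Suppose h : ℝ → ℂ is C² with ‖h^{(ℓ)}‖_{L∞} ≤ C for ℓ = 0,1,2 on |k| ≥ 1 and |(k d/dk)^ℓ h(k)| ≤ C on |k| ≤ 1, and f : ℝ → ℂ is C² with bounded derivatives up to order 2. Then for all t ≥ 1, |∫₀^∞ e^{±itk²/2} h(k) f(k) dk| ≤ C' t^{−1/2} (‖f‖_∞ + ‖f'‖_∞ + ‖f''‖_∞), with C' depending only on C. -/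
open Filter

/-- The operator `f ↦ k f'`. -/
noncomputable def kD (f : ℝ → ℂ) : ℝ → ℂ := fun k => k * deriv f k

section AuxStationaryPhase
open MeasureTheory intervalIntegral Set

private lemma c2_facts (g : ℝ → ℂ) (hg : ContDiff ℝ 2 g) :
    Differentiable ℝ g ∧ Differentiable ℝ (deriv g) ∧ Continuous (deriv (deriv g)) := by
  have e2 : (2 : WithTop ℕ∞) = 1 + 1 := by norm_num
  have h1 : ContDiff ℝ 1 (deriv g) := (contDiff_succ_iff_deriv.mp (e2 ▸ hg)).2.2
  have e1 : (1 : WithTop ℕ∞) = 0 + 1 := by norm_num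
  exact ⟨hg.differentiable (by norm_num), h1.differentiable (by norm_num),
    ((contDiff_succ_iff_deriv.mp (e1 ▸ h1)).2.2).continuous⟩

private lemma hasDerivAt_ofReal (x : ℝ) : HasDerivAt (fun k : ℝ => (k:ℂ)) 1 x := by
  simpa using (hasDerivAt_id x).ofReal_comp

private lemma hasDerivAt_E (c : ℂ) (x : ℝ) :
    HasDerivAt (fun k : ℝ => Complex.exp (c * (k:ℂ)^2/2)) (c * x * Complex.exp (c*(x:ℂ)^2/2)) x := by
  have h0 := hasDerivAt_ofReal x
  have h1 : HasDerivAt (fun k : ℝ => c * (k:ℂ)^2/2) (c * x) x := by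
    have := ((h0.mul h0).const_mul (c/2))
    convert this using 1 <;> try (with_reducible_and_instances rfl)
    · funext k; simp only [Pi.mul_apply]; ring
    · ring
  have := h1.cexp
  convert this using 1 <;> try (with_reducible_and_instances rfl)
  ring

private lemma hasDerivAt_quot1 (g : ℝ → ℂ) (c : ℂ) (hc : c ≠ 0) (x : ℝ) (hx : x ≠ 0)
    (hg : DifferentiableAt ℝ g x) :
    HasDerivAt (fun k : ℝ => g k / (c * k))
      ((deriv g x / (x:ℂ) - g x / (x:ℂ)^2) / c) x := by
  have hxC : (x:ℂ) ≠ 0 := Complex.ofReal_ne_zero.mpr hx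
  have hden : HasDerivAt (fun k : ℝ => c * (k:ℂ)) (c * 1) x := (hasDerivAt_ofReal x).const_mul c
  have := hg.hasDerivAt.div hden (by simpa using mul_ne_zero hc hxC)
  convert this using 1 <;> try (with_reducible_and_instances rfl)
  field_simp

private lemma hasDerivAt_quot2 (g : ℝ → ℂ) (c : ℂ) (hc : c ≠ 0) (x : ℝ) (hx : x ≠ 0)
    (hg : Differentiable ℝ g) (hg1 : DifferentiableAt ℝ (deriv g) x) :
    HasDerivAt (fun k : ℝ => (deriv g k / (k:ℂ) - g k / (k:ℂ)^2) / (c * k))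
      ((deriv (deriv g) x / (x:ℂ)^2 - 3 * deriv g x / (x:ℂ)^3 + 3 * g x / (x:ℂ)^4) / c) x := by
  have hxC : (x:ℂ) ≠ 0 := Complex.ofReal_ne_zero.mpr hx
  have h0 := hasDerivAt_ofReal x
  have hA : HasDerivAt (fun k : ℝ => deriv g k / (k:ℂ))
      ((deriv (deriv g) x * x - deriv g x * 1) / (x:ℂ)^2) x :=
    hg1.hasDerivAt.div h0 hxC
  have hB : HasDerivAt (fun k : ℝ => g k / (k:ℂ)^2)
      ((deriv g x * (x:ℂ)^2 - g x * (1 * (x:ℂ) + (x:ℂ) * 1)) / ((x:ℂ)^2)^2) x := by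
    have hden : HasDerivAt (fun k : ℝ => ((k:ℂ))^2) (1 * (x:ℂ) + (x:ℂ) * 1) x := by
      have := h0.mul h0
      convert this using 1 <;> try (with_reducible_and_instances rfl)
      funext k; simp only [Pi.mul_apply]; ring
    exact (hg x).hasDerivAt.div hden (pow_ne_zero 2 hxC)
  have hnum := hA.sub hB
  have hden : HasDerivAt (fun k : ℝ => c * (k:ℂ)) (c * 1) x := h0.const_mul c
  have := hnum.div hden (by simpa using mul_ne_zero hc hxC)
  convert this using 1 <;> try (with_reducible_and_instances rfl)
  simp only [Pi.sub_apply]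
  rw [div_eq_div_iff hc (pow_ne_zero 2 (mul_ne_zero hc hxC))]
  field_simp
  ring


set_option maxHeartbeats 1000000 in
/-- Stationary phase bound: if `h` is conormal with constant `C` (up to order 2)
and `f` is `C²` with bounded derivatives, then for `t ≥ 1`,
`|∫₀^∞ e^{±itk²/2} h(k) f(k) dk| ≤ C' t^{−1/2}(‖f‖_∞+‖f'‖_∞+‖f''‖_∞)`
with `C'` depending only on `C`. -/
theorem stmt15 (C : ℝ) (hC : 0 ≤ C) :
    ∃ C' : ℝ, 0 < C' ∧ ∀ (h f : ℝ → ℂ) (M0 M1 M2 : ℝ),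
      ContDiff ℝ 2 h →
      (∀ ℓ : ℕ, ℓ ≤ 2 → ∀ k : ℝ, 1 ≤ |k| → ‖iteratedDeriv ℓ h k‖ ≤ C) →
      (∀ ℓ : ℕ, ℓ ≤ 2 → ∀ k : ℝ, |k| ≤ 1 → ‖(kD^[ℓ] h) k‖ ≤ C) →
      ContDiff ℝ 2 f →
      (∀ k, ‖f k‖ ≤ M0) → (∀ k, ‖deriv f k‖ ≤ M1) → (∀ k, ‖deriv (deriv f) k‖ ≤ M2) →
      ∀ t : ℝ, 1 ≤ t → ∀ ε : ℝ, ε = 1 ∨ ε = -1 →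
        ∃ L : ℂ,
          Tendsto (fun R : ℝ => ∫ k in (0:ℝ)..R,
              Complex.exp ((ε : ℂ) * Complex.I * t * (k:ℂ)^2 / 2) * h k * f k)
            atTop (nhds L) ∧
          ‖L‖ ≤ C' * t ^ (-(1:ℝ)/2) * (M0 + M1 + M2) := by
  refine ⟨40 * (C + 1), by positivity, ?_⟩
  intro h f M0 M1 M2 hh hout hin hf hM0 hM1 hM2 t ht ε hε
  have ht0 : (0:ℝ) < t := lt_of_lt_of_le one_pos ht
  set δ : ℝ := t ^ (-(1:ℝ)/2) with hδdef
  have hδ0 : 0 < δ := Real.rpow_pos_of_pos ht0 _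
  have hδ1 : δ ≤ 1 := Real.rpow_le_one_of_one_le_of_nonpos ht (by norm_num)
  have hδsq : t * δ ^ 2 = 1 := by
    have h2 : δ ^ 2 = t ^ (-1 : ℝ) := by
      rw [hδdef, ← Real.rpow_natCast (t ^ (-(1:ℝ)/2)) 2, ← Real.rpow_mul ht0.le]
      norm_num
    rw [h2, Real.rpow_neg_one, mul_inv_cancel₀ ht0.ne']
  set M : ℝ := M0 + M1 + M2 with hMdef
  have hM0' : 0 ≤ M0 := le_trans (norm_nonneg _) (hM0 0)
  have hM1' : 0 ≤ M1 := le_trans (norm_nonneg _) (hM1 0)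
  have hM2' : 0 ≤ M2 := le_trans (norm_nonneg _) (hM2 0)
  have hM : 0 ≤ M := by rw [hMdef]; linarith
  have hM0M : M0 ≤ M := by rw [hMdef]; linarith
  have hM1M : M1 ≤ M := by rw [hMdef]; linarith
  have hM2M : M2 ≤ M := by rw [hMdef]; linarith
  set c : ℂ := (ε:ℂ) * Complex.I * (t:ℂ) with hcdef
  have hnormc : ‖c‖ = t := by
    rcases hε with rfl | rfl <;>
      simp [hcdef, norm_mul, Complex.norm_real, Real.norm_eq_abs, abs_of_pos ht0]
  have hc0 : c ≠ 0 := by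
    intro h0; rw [h0] at hnormc; simp at hnormc; linarith
  set E : ℝ → ℂ := fun k => Complex.exp (c * (k:ℂ)^2/2) with hEdef
  have hE1 : ∀ x : ℝ, ‖E x‖ = 1 := by
    intro x
    have hphase : c * (x:ℂ)^2/2 = ((ε * t * x^2/2 : ℝ) : ℂ) * Complex.I := by
      rw [hcdef]; push_cast; ring
    rw [hEdef]; simp only []
    rw [hphase, Complex.norm_exp_ofReal_mul_I]
  have hEcont : Continuous E := by
    rw [hEdef]; exact Complex.continuous_exp.comp (by fun_prop)
  set g : ℝ → ℂ := fun k => h k * f k with hgdef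
  have hgC2 : ContDiff ℝ 2 g := hh.mul hf
  obtain ⟨hgd, hgd1, hgc2⟩ := c2_facts g hgC2
  obtain ⟨hhd, hhd1, hhc2⟩ := c2_facts h hh
  obtain ⟨hfd, hfd1, hfc2⟩ := c2_facts f hf
  have hg1 : ∀ k, deriv g k = deriv h k * f k + h k * deriv f k := by
    intro k; rw [hgdef]; exact deriv_mul (hhd k) (hfd k)
  have hg1fun : deriv g = fun k => deriv h k * f k + h k * deriv f k := funext hg1
  have hg2 : ∀ k, deriv (deriv g) k =
      (deriv (deriv h) k * f k + deriv h k * deriv f k) +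
      (deriv h k * deriv f k + h k * deriv (deriv f) k) := by
    intro k
    rw [hg1fun, deriv_fun_add (f := fun k => deriv h k * f k) (g := fun k => h k * deriv f k) ((hhd1 k).mul (hfd k)) ((hhd k).mul (hfd1 k)),
        deriv_fun_mul (hhd1 k) (hfd k), deriv_fun_mul (hhd k) (hfd1 k)]
  -- pointwise bounds on h and its derivatives
  have hhB : ∀ k : ℝ, ‖h k‖ ≤ C := by
    intro k
    rcases le_or_gt |k| 1 with hk | hk
    · simpa using hin 0 (by norm_num) k hk
    · simpa [iteratedDeriv_zero] using hout 0 (by norm_num) k hk.le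
  have hh1B : ∀ k : ℝ, 0 < k → ‖deriv h k‖ ≤ C / k + C := by
    intro k hk
    have hCk : 0 ≤ C / k := div_nonneg hC hk.le
    rcases le_or_gt k 1 with hk1 | hk1
    · have hb := hin 1 (by norm_num) k (by rwa [abs_of_pos hk])
      rw [Function.iterate_one] at hb
      have hn : ‖(kD h) k‖ = k * ‖deriv h k‖ := by
        rw [show (kD h) k = (k:ℂ) * deriv h k from rfl, norm_mul, Complex.norm_real,
          Real.norm_eq_abs, abs_of_pos hk]
      rw [hn] at hb
      have h2 : ‖deriv h k‖ ≤ C / k := by rw [le_div_iff₀ hk]; linarith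
      linarith
    · have hb := hout 1 (by norm_num) k (by rw [abs_of_pos hk]; linarith)
      rw [iteratedDeriv_one] at hb
      linarith
  have hkD1 : ∀ k : ℝ, deriv (kD h) k = deriv h k + k * deriv (deriv h) k := by
    intro k
    have h1 : HasDerivAt (fun k : ℝ => (k:ℂ) * deriv h k)
        (1 * deriv h k + (k:ℂ) * deriv (deriv h) k) k :=
      (hasDerivAt_ofReal k).mul (hhd1 k).hasDerivAt
    have := h1.deriv
    rw [show (kD h) = fun k : ℝ => (k:ℂ) * deriv h k from rfl, this]
    ring
  have hh2B : ∀ k : ℝ, 0 < k → ‖deriv (deriv h) k‖ ≤ 3 * C / k ^ 2 + C := by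
    intro k hk
    have hCk : 0 ≤ 3 * C / k ^ 2 := by positivity
    rcases le_or_gt k 1 with hk1 | hk1
    · have hb := hin 2 (by norm_num) k (by rwa [abs_of_pos hk])
      rw [show kD^[2] h = kD (kD h) from by
        rw [Function.iterate_succ, Function.iterate_one]; rfl] at hb
      have hn : (kD (kD h)) k = (k:ℂ) * (deriv h k + (k:ℂ) * deriv (deriv h) k) := by
        rw [show (kD (kD h)) k = (k:ℂ) * deriv (kD h) k from rfl, hkD1 k]
      rw [hn] at hb
      have hnk : ‖(k:ℂ) * (deriv h k + (k:ℂ) * deriv (deriv h) k)‖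
          = k * ‖deriv h k + (k:ℂ) * deriv (deriv h) k‖ := by
        rw [norm_mul, Complex.norm_real, Real.norm_eq_abs, abs_of_pos hk]
      rw [hnk] at hb
      have hb2 : ‖deriv h k + (k:ℂ) * deriv (deriv h) k‖ ≤ C / k := by
        rw [le_div_iff₀ hk]; linarith
      have hb3 : ‖(k:ℂ) * deriv (deriv h) k‖ ≤ C / k + (C / k + C) := by
        calc ‖(k:ℂ) * deriv (deriv h) k‖
            = ‖(deriv h k + (k:ℂ) * deriv (deriv h) k) - deriv h k‖ := by ring_nf
          _ ≤ ‖deriv h k + (k:ℂ) * deriv (deriv h) k‖ + ‖deriv h k‖ := norm_sub_le _ _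
          _ ≤ C / k + (C / k + C) := add_le_add hb2 (hh1B k hk)
      have hnk2 : ‖(k:ℂ) * deriv (deriv h) k‖ = k * ‖deriv (deriv h) k‖ := by
        rw [norm_mul, Complex.norm_real, Real.norm_eq_abs, abs_of_pos hk]
      rw [hnk2] at hb3
      have h4 : ‖deriv (deriv h) k‖ ≤ (2 * C / k + C) / k := by
        rw [le_div_iff₀ hk]
        have e : 2 * C / k + C = C / k + (C / k + C) := by ring
        rw [e]; linarith
      have h5 : (2 * C / k + C) / k ≤ 3 * C / k ^ 2 := by
        rw [div_le_div_iff₀ hk (by positivity)]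
        have e1 : (2 * C / k + C) * k ^ 2 = 2 * C * k + C * k ^ 2 := by field_simp
        rw [e1]
        nlinarith [mul_nonneg (mul_nonneg hC hk.le) (sub_nonneg.mpr hk1)]
      linarith
    · have hb := hout 2 (by norm_num) k (by rw [abs_of_pos hk]; linarith)
      rw [iteratedDeriv_succ, iteratedDeriv_one] at hb
      linarith
  -- bounds on g
  have hgB : ∀ k : ℝ, ‖g k‖ ≤ C * M := by
    intro k
    rw [hgdef]
    calc ‖h k * f k‖ = ‖h k‖ * ‖f k‖ := norm_mul _ _
      _ ≤ C * M := by
          have := hM0 k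
          nlinarith [norm_nonneg (h k), norm_nonneg (f k), hhB k]
  have hg1B : ∀ k : ℝ, 0 < k → ‖deriv g k‖ ≤ 2 * C * M * (1 / k + 1) := by
    intro k hk
    rw [hg1 k]
    have h1 : ‖deriv h k * f k‖ ≤ (C / k + C) * M0 := by
      rw [norm_mul]
      exact mul_le_mul (hh1B k hk) (hM0 k) (norm_nonneg _)
        (by positivity)
    have h2 : ‖h k * deriv f k‖ ≤ C * M1 := by
      rw [norm_mul]
      exact mul_le_mul (hhB k) (hM1 k) (norm_nonneg _) hC
    calc ‖deriv h k * f k + h k * deriv f k‖ ≤ ‖deriv h k * f k‖ + ‖h k * deriv f k‖ :=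
        norm_add_le _ _
      _ ≤ (C / k + C) * M0 + C * M1 := add_le_add h1 h2
      _ ≤ (C / k + C) * M + C * M :=
          add_le_add (mul_le_mul_of_nonneg_left hM0M (by positivity))
            (mul_le_mul_of_nonneg_left hM1M hC)
      _ ≤ 2 * C * M * (1 / k + 1) := by
          rw [← sub_nonneg]
          have e : 2*C*M*(1/k+1) - ((C / k + C) * M + C * M) = C*M/k := by field_simp; ring
          rw [e]; positivity
  have hg2B : ∀ k : ℝ, 0 < k → ‖deriv (deriv g) k‖ ≤ 6 * C * M * (1 / k ^ 2 + 1) := by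
    intro k hk
    rw [hg2 k]
    have b1 : ‖deriv (deriv h) k * f k‖ ≤ (3 * C / k ^ 2 + C) * M0 := by
      rw [norm_mul]; exact mul_le_mul (hh2B k hk) (hM0 k) (norm_nonneg _) (by positivity)
    have b2 : ‖deriv h k * deriv f k‖ ≤ (C / k + C) * M1 := by
      rw [norm_mul]; exact mul_le_mul (hh1B k hk) (hM1 k) (norm_nonneg _) (by positivity)
    have b3 : ‖h k * deriv (deriv f) k‖ ≤ C * M2 := by
      rw [norm_mul]; exact mul_le_mul (hhB k) (hM2 k) (norm_nonneg _) hC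
    have tri : ‖(deriv (deriv h) k * f k + deriv h k * deriv f k) +
        (deriv h k * deriv f k + h k * deriv (deriv f) k)‖ ≤
        ‖deriv (deriv h) k * f k‖ + ‖deriv h k * deriv f k‖ +
        (‖deriv h k * deriv f k‖ + ‖h k * deriv (deriv f) k‖) :=
      le_trans (norm_add_le _ _) (add_le_add (norm_add_le _ _) (norm_add_le _ _))
    calc _ ≤ ‖deriv (deriv h) k * f k‖ + ‖deriv h k * deriv f k‖ +
        (‖deriv h k * deriv f k‖ + ‖h k * deriv (deriv f) k‖) := tri
      _ ≤ (3 * C / k ^ 2 + C) * M0 + (C / k + C) * M1 + ((C / k + C) * M1 + C * M2) :=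
          add_le_add (add_le_add b1 b2) (add_le_add b2 b3)
      _ ≤ (3 * C / k ^ 2 + C) * M + (C / k + C) * M + ((C / k + C) * M + C * M) :=
          add_le_add (add_le_add (mul_le_mul_of_nonneg_left hM0M (by positivity))
            (mul_le_mul_of_nonneg_left hM1M (by positivity)))
            (add_le_add (mul_le_mul_of_nonneg_left hM1M (by positivity))
              (mul_le_mul_of_nonneg_left hM2M hC))
      _ ≤ 6 * C * M * (1 / k ^ 2 + 1) := by
          rw [← sub_nonneg]
          have e : 6 * C * M * (1 / k ^ 2 + 1) -
              ((3 * C / k ^ 2 + C) * M + (C / k + C) * M + ((C / k + C) * M + C * M)) =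
              C * M * ((1/k - 1)^2 + 2/k^2 + 1) := by field_simp; ring
          rw [e]; positivity
  -- w and v
  set w : ℝ → ℂ := fun k => deriv g k / (k:ℂ) - g k / (k:ℂ)^2 with hwdef
  set v : ℝ → ℂ := fun k => deriv (deriv g) k / (k:ℂ)^2 - 3 * deriv g k / (k:ℂ)^3
      + 3 * g k / (k:ℂ)^4 with hvdef
  have hnormR : ∀ x : ℝ, 0 < x → ‖(x:ℂ)‖ = x := fun x hx => by
    rw [Complex.norm_real, Real.norm_eq_abs, abs_of_pos hx]
  have hwB : ∀ k : ℝ, 0 < k → ‖w k‖ ≤ 6 * C * M * (1 / k ^ 2 + 1) := by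
    intro k hk
    rw [hwdef]
    have e1 : ‖deriv g k / (k:ℂ)‖ = ‖deriv g k‖ / k := by rw [norm_div, hnormR k hk]
    have e2 : ‖g k / (k:ℂ)^2‖ = ‖g k‖ / k ^ 2 := by rw [norm_div, norm_pow, hnormR k hk]
    calc ‖deriv g k / (k:ℂ) - g k / (k:ℂ)^2‖
        ≤ ‖deriv g k / (k:ℂ)‖ + ‖g k / (k:ℂ)^2‖ := norm_sub_le _ _
      _ = ‖deriv g k‖ / k + ‖g k‖ / k ^ 2 := by rw [e1, e2]
      _ ≤ (2 * C * M * (1 / k + 1)) / k + (C * M) / k ^ 2 := by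
          gcongr
          exacts [hg1B k hk, hgB k]
      _ ≤ 6 * C * M * (1 / k ^ 2 + 1) := by
          rw [← sub_nonneg]
          have e : 6 * C * M * (1 / k ^ 2 + 1) - ((2 * C * M * (1 / k + 1)) / k + (C * M) / k ^ 2)
              = C * M * ((1/k - 1)^2 + 2/k^2 + 5) := by field_simp; ring
          rw [e]; positivity
  have hvB : ∀ k : ℝ, 0 < k → ‖v k‖ ≤ 18 * C * M * (1 / k ^ 4 + 1 / k ^ 2) := by
    intro k hk
    rw [hvdef]
    have e1 : ‖deriv (deriv g) k / (k:ℂ)^2‖ = ‖deriv (deriv g) k‖ / k ^ 2 := by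
      rw [norm_div, norm_pow, hnormR k hk]
    have e2 : ‖3 * deriv g k / (k:ℂ)^3‖ = 3 * ‖deriv g k‖ / k ^ 3 := by
      rw [norm_div, norm_mul, norm_pow, hnormR k hk]
      norm_num
    have e3 : ‖3 * g k / (k:ℂ)^4‖ = 3 * ‖g k‖ / k ^ 4 := by
      rw [norm_div, norm_mul, norm_pow, hnormR k hk]
      norm_num
    calc ‖deriv (deriv g) k / (k:ℂ)^2 - 3 * deriv g k / (k:ℂ)^3 + 3 * g k / (k:ℂ)^4‖
        ≤ ‖deriv (deriv g) k / (k:ℂ)^2 - 3 * deriv g k / (k:ℂ)^3‖ + ‖3 * g k / (k:ℂ)^4‖ :=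
          norm_add_le _ _
      _ ≤ ‖deriv (deriv g) k / (k:ℂ)^2‖ + ‖3 * deriv g k / (k:ℂ)^3‖ + ‖3 * g k / (k:ℂ)^4‖ :=
          add_le_add_left (norm_sub_le _ _) _
      _ = ‖deriv (deriv g) k‖ / k ^ 2 + 3 * ‖deriv g k‖ / k ^ 3 + 3 * ‖g k‖ / k ^ 4 := by
          rw [e1, e2, e3]
      _ ≤ (6 * C * M * (1 / k ^ 2 + 1)) / k ^ 2 + 3 * (2 * C * M * (1 / k + 1)) / k ^ 3
          + 3 * (C * M) / k ^ 4 := by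
          gcongr
          exacts [hg2B k hk, hg1B k hk, hgB k]
      _ ≤ 18 * C * M * (1 / k ^ 4 + 1 / k ^ 2) := by
          rw [← sub_nonneg]
          have e : 18 * C * M * (1 / k ^ 4 + 1 / k ^ 2) -
              ((6 * C * M * (1 / k ^ 2 + 1)) / k ^ 2 + 3 * (2 * C * M * (1 / k + 1)) / k ^ 3
                + 3 * (C * M) / k ^ 4)
              = 3 * C * M * ((1/k^2 - 1/k)^2 + 3/k^2) := by field_simp; ring
          rw [e]; positivity
  -- continuity of w and v away from 0
  have hwcontOn : ContinuousOn w {x : ℝ | x ≠ 0} := by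
    rw [hwdef]
    exact (hgd1.continuous.continuousOn.div Complex.continuous_ofReal.continuousOn
        (fun x hx => Complex.ofReal_ne_zero.mpr hx)).sub
      (hgd.continuous.continuousOn.div (Complex.continuous_ofReal.pow 2).continuousOn
        (fun x hx => pow_ne_zero 2 (Complex.ofReal_ne_zero.mpr hx)))
  have hvcontOn : ContinuousOn v {x : ℝ | x ≠ 0} := by
    rw [hvdef]
    exact ((hgc2.continuousOn.div (Complex.continuous_ofReal.pow 2).continuousOn
        (fun x hx => pow_ne_zero 2 (Complex.ofReal_ne_zero.mpr hx))).sub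
      ((continuous_const.mul hgd1.continuous).continuousOn.div
        (Complex.continuous_ofReal.pow 3).continuousOn
        (fun x hx => pow_ne_zero 3 (Complex.ofReal_ne_zero.mpr hx)))).add
      ((continuous_const.mul hgd.continuous).continuousOn.div
        (Complex.continuous_ofReal.pow 4).continuousOn
        (fun x hx => pow_ne_zero 4 (Complex.ofReal_ne_zero.mpr hx)))
  -- the integration by parts identity
  have hEg_ii : ∀ a b : ℝ, IntervalIntegrable (fun kk => E kk * g kk) volume a b :=
    fun a b => (hEcont.mul hgd.continuous).intervalIntegrable a b
  have key : ∀ R : ℝ, δ ≤ R → (∫ k in (0:ℝ)..R, E k * g k) =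
      (∫ k in (0:ℝ)..δ, E k * g k) +
      (g R / (c*R) * E R - g δ / (c*δ) * E δ
        - c⁻¹ * (w R / (c*R) * E R - w δ / (c*δ) * E δ - c⁻¹ * ∫ x in δ..R, v x * E x)) := by
    intro R hR
    have hposIcc : ∀ x ∈ uIcc δ R, 0 < x := by
      rw [uIcc_of_le hR]; exact fun x hx => lt_of_lt_of_le hδ0 hx.1
    have hsub : uIcc δ R ⊆ {x : ℝ | x ≠ 0} := fun x hx => (hposIcc x hx).ne'
    have hEd : ∀ x ∈ uIcc δ R, HasDerivAt E (c * x * E x) x := fun x _ => hasDerivAt_E c x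
    have hintEv : IntervalIntegrable (fun x : ℝ => c * x * E x) volume δ R :=
      ((continuous_const.mul Complex.continuous_ofReal).mul hEcont).intervalIntegrable _ _
    have hintw : IntervalIntegrable (fun x => w x / c) volume δ R :=
      ((hwcontOn.mono hsub).div_const c).intervalIntegrable
    have hintv : IntervalIntegrable (fun x => v x / c) volume δ R :=
      ((hvcontOn.mono hsub).div_const c).intervalIntegrable
    have ibp1 := intervalIntegral.integral_mul_deriv_eq_deriv_mul
      (u := fun kk => g kk / (c * kk)) (u' := fun kk => w kk / c) (v := E)
      (v' := fun x : ℝ => c * x * E x)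
      (fun x hx => hasDerivAt_quot1 g c hc0 x (hposIcc x hx).ne' (hgd x))
      hEd hintw hintEv
    have ibp2 := intervalIntegral.integral_mul_deriv_eq_deriv_mul
      (u := fun kk => w kk / (c * kk)) (u' := fun kk => v kk / c) (v := E)
      (v' := fun x : ℝ => c * x * E x)
      (fun x hx => hasDerivAt_quot2 g c hc0 x (hposIcc x hx).ne' hgd (hgd1 x))
      hEd hintv hintEv
    have lhs1 : (∫ x in δ..R, E x * g x) = ∫ x in δ..R, (g x / (c * x)) * (c * x * E x) := by
      apply intervalIntegral.integral_congr
      intro x hx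
      have hx0 : (x:ℂ) ≠ 0 := Complex.ofReal_ne_zero.mpr (hposIcc x hx).ne'
      field_simp
    have lhs2 : (∫ x in δ..R, w x * E x) = ∫ x in δ..R, (w x / (c * x)) * (c * x * E x) := by
      apply intervalIntegral.integral_congr
      intro x hx
      have hx0 : (x:ℂ) ≠ 0 := Complex.ofReal_ne_zero.mpr (hposIcc x hx).ne'
      field_simp
    have rem1 : (∫ x in δ..R, (w x / c) * E x) = c⁻¹ * ∫ x in δ..R, w x * E x := by
      rw [← intervalIntegral.integral_const_mul]
      apply intervalIntegral.integral_congr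
      intro x _
      ring
    have rem2 : (∫ x in δ..R, (v x / c) * E x) = c⁻¹ * ∫ x in δ..R, v x * E x := by
      rw [← intervalIntegral.integral_const_mul]
      apply intervalIntegral.integral_congr
      intro x _
      ring
    have adj : (∫ k in (0:ℝ)..δ, E k * g k) + (∫ k in δ..R, E k * g k)
        = ∫ k in (0:ℝ)..R, E k * g k :=
      intervalIntegral.integral_add_adjacent_intervals (hEg_ii 0 δ) (hEg_ii δ R)
    rw [← adj, lhs1, ibp1, rem1, lhs2, ibp2, rem2]
  -- integrability of the majorant and of v·E on (δ, ∞)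
  have hr4 : ∀ x : ℝ, 0 < x → x ^ (-4:ℝ) = 1/x^4 := fun x hx => by
    rw [show (-4:ℝ) = -((4:ℕ):ℝ) by norm_num, Real.rpow_neg hx.le, Real.rpow_natCast, one_div]
  have hr2 : ∀ x : ℝ, 0 < x → x ^ (-2:ℝ) = 1/x^2 := fun x hx => by
    rw [show (-2:ℝ) = -((2:ℕ):ℝ) by norm_num, Real.rpow_neg hx.le, Real.rpow_natCast, one_div]
  have hr3 : ∀ x : ℝ, 0 < x → x ^ (-3:ℝ) = 1/x^3 := fun x hx => by
    rw [show (-3:ℝ) = -((3:ℕ):ℝ) by norm_num, Real.rpow_neg hx.le, Real.rpow_natCast, one_div]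
  have hρint : IntegrableOn (fun k : ℝ => 18*C*M*(k ^ (-4:ℝ) + k ^ (-2:ℝ))) (Ioi δ) volume := by
    apply Integrable.const_mul
    exact (integrableOn_Ioi_rpow_of_lt (by norm_num) hδ0).add
      (integrableOn_Ioi_rpow_of_lt (by norm_num) hδ0)
  have hbound : ∀ x ∈ Ioi δ, ‖v x * E x‖ ≤ 18*C*M*(x ^ (-4:ℝ) + x ^ (-2:ℝ)) := by
    intro x hx
    have hx0 : 0 < x := lt_trans hδ0 hx
    rw [norm_mul, hE1 x, mul_one, hr4 x hx0, hr2 x hx0]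
    exact hvB x hx0
  have hJint : IntegrableOn (fun x => v x * E x) (Ioi δ) volume := by
    apply Integrable.mono' hρint
    · exact ((hvcontOn.mono (fun x (hx : x ∈ Ioi δ) => (lt_trans hδ0 hx).ne')).mul
        hEcont.continuousOn).aestronglyMeasurable measurableSet_Ioi
    · exact (ae_restrict_iff' measurableSet_Ioi).mpr (ae_of_all _ hbound)
  -- limits
  have lim1 : Tendsto (fun R => ∫ x in δ..R, v x * E x) atTop
      (nhds (∫ x in Ioi δ, v x * E x)) :=
    intervalIntegral_tendsto_integral_Ioi δ hJint tendsto_id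
  have lim2 : Tendsto (fun R : ℝ => g R / (c*R) * E R) atTop (nhds 0) := by
    have hbd : ∀ᶠ R : ℝ in atTop, ‖g R / (c*R) * E R‖ ≤ C*M/R := by
      filter_upwards [eventually_ge_atTop (1:ℝ)] with R hR1
      have hR0 : 0 < R := lt_of_lt_of_le one_pos hR1
      rw [norm_mul, hE1, mul_one, norm_div, norm_mul c, hnormc, hnormR R hR0]
      exact div_le_div₀ (by positivity) (hgB R) hR0 (by nlinarith)
    exact squeeze_zero_norm' hbd (tendsto_const_nhds.div_atTop tendsto_id)
  have lim3 : Tendsto (fun R : ℝ => w R / (c*R) * E R) atTop (nhds 0) := by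
    have hbd : ∀ᶠ R : ℝ in atTop, ‖w R / (c*R) * E R‖ ≤ 12*C*M/R := by
      filter_upwards [eventually_ge_atTop (1:ℝ)] with R hR1
      have hR0 : 0 < R := lt_of_lt_of_le one_pos hR1
      rw [norm_mul, hE1, mul_one, norm_div, norm_mul c, hnormc, hnormR R hR0]
      have hw12 : ‖w R‖ ≤ 12*C*M := by
        refine le_trans (hwB R hR0) ?_
        rw [← sub_nonneg]
        have e : 12*C*M - 6 * C * M * (1 / R ^ 2 + 1) = 6*C*M*((R^2-1)/R^2) := by
          field_simp; ring
        rw [e]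
        have h1 : (0:ℝ) ≤ R^2 - 1 := by nlinarith
        apply mul_nonneg (by positivity) (div_nonneg h1 (by positivity))
      exact div_le_div₀ (by positivity) hw12 hR0 (by nlinarith)
    exact squeeze_zero_norm' hbd (tendsto_const_nhds.div_atTop tendsto_id)
  -- conclusion
  set J : ℂ := ∫ x in Ioi δ, v x * E x with hJdef
  set I0 : ℂ := ∫ k in (0:ℝ)..δ, E k * g k with hI0def
  refine ⟨I0 + ((0:ℂ) - g δ / (c*δ) * E δ - c⁻¹ * (0 - w δ / (c*δ) * E δ - c⁻¹ * J)), ?_, ?_⟩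
  · have hT : Tendsto (fun R : ℝ => I0 + (g R / (c*R) * E R - g δ / (c*δ) * E δ
        - c⁻¹ * (w R / (c*R) * E R - w δ / (c*δ) * E δ - c⁻¹ * ∫ x in δ..R, v x * E x)))
        atTop (nhds (I0 + ((0:ℂ) - g δ / (c*δ) * E δ
          - c⁻¹ * (0 - w δ / (c*δ) * E δ - c⁻¹ * J)))) :=
      tendsto_const_nhds.add ((lim2.sub tendsto_const_nhds).sub
        (((lim3.sub tendsto_const_nhds).sub (lim1.const_mul c⁻¹)).const_mul c⁻¹))
    apply hT.congr'
    filter_upwards [eventually_ge_atTop δ] with R hR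
    rw [← key R hR]
    apply intervalIntegral.integral_congr
    intro x _
    simp only [hEdef, hgdef]
    ring
  · have htinv : (1:ℝ)/t = δ^2 := by
      rw [eq_comm, eq_div_iff ht0.ne']
      linarith [hδsq]
    have hnorm_cinv : ‖c⁻¹‖ = 1/t := by rw [norm_inv, hnormc]; exact (one_div t).symm
    have hI0B : ‖I0‖ ≤ C*M*δ := by
      rw [hI0def]
      refine le_trans (intervalIntegral.norm_integral_le_of_norm_le_const (C := C*M)
        (fun x _ => by rw [norm_mul, hE1, one_mul]; exact hgB x)) ?_
      rw [sub_zero, abs_of_pos hδ0]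
    have hB1 : ‖g δ / (c*δ) * E δ‖ ≤ C*M*δ := by
      rw [norm_mul, hE1, mul_one, norm_div, norm_mul c, hnormc, hnormR δ hδ0]
      rw [div_le_iff₀ (by positivity)]
      calc ‖g δ‖ ≤ C*M := hgB δ
        _ = C*M*δ*(t*δ) := by
            rw [show C*M*δ*(t*δ) = C*M*(t*δ^2) by ring, hδsq, mul_one]
    have hB2 : ‖c⁻¹ * (w δ / (c*δ) * E δ)‖ ≤ 12*C*M*δ := by
      rw [norm_mul, hnorm_cinv, norm_mul, hE1, mul_one, norm_div, norm_mul c, hnormc,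
        hnormR δ hδ0]
      have hw : ‖w δ‖ ≤ 12*C*M/δ^2 := by
        refine le_trans (hwB δ hδ0) ?_
        rw [← sub_nonneg]
        have e : 12*C*M/δ^2 - 6*C*M*(1/δ^2+1) = 6*C*M*((1-δ^2)/δ^2) := by field_simp; ring
        rw [e]
        have h1 : (0:ℝ) ≤ 1 - δ^2 := by nlinarith
        exact mul_nonneg (by positivity) (div_nonneg h1 (by positivity))
      calc 1/t * (‖w δ‖/(t*δ)) ≤ 1/t * ((12*C*M/δ^2)/(t*δ)) := by gcongr
        _ = (1/t)*(1/t)*(12*C*M/δ^2)/δ := by ring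
        _ = δ^2*δ^2*(12*C*M/δ^2)/δ := by rw [htinv]
        _ = 12*C*M*δ := by field_simp
    have hJB : ‖J‖ ≤ 24*C*M/δ^3 := by
      have hJb1 : ‖J‖ ≤ ∫ x in Ioi δ, 18*C*M*(x ^ (-4:ℝ) + x ^ (-2:ℝ)) := by
        rw [hJdef]
        exact norm_integral_le_of_norm_le hρint
          ((ae_restrict_iff' measurableSet_Ioi).mpr (ae_of_all _ hbound))
      have hJb2 : (∫ x in Ioi δ, 18*C*M*(x ^ (-4:ℝ) + x ^ (-2:ℝ)))
          = 18*C*M*(δ^(-3:ℝ)/3 + δ^(-1:ℝ)) := by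
        rw [MeasureTheory.integral_const_mul,
          MeasureTheory.integral_add (integrableOn_Ioi_rpow_of_lt (by norm_num) hδ0)
            (integrableOn_Ioi_rpow_of_lt (by norm_num) hδ0),
          integral_Ioi_rpow_of_lt (by norm_num) hδ0,
          integral_Ioi_rpow_of_lt (by norm_num) hδ0]
        norm_num
      have h1 : δ^(-1:ℝ) ≤ δ^(-3:ℝ) :=
        Real.rpow_le_rpow_of_exponent_ge hδ0 hδ1 (by norm_num)
      calc ‖J‖ ≤ 18*C*M*(δ^(-3:ℝ)/3 + δ^(-1:ℝ)) := hJb2 ▸ hJb1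
        _ ≤ 18*C*M*(δ^(-3:ℝ)/3 + δ^(-3:ℝ)) := by gcongr
        _ = 24*C*M*(δ^(-3:ℝ)) := by ring
        _ = 24*C*M/δ^3 := by rw [hr3 δ hδ0]; ring
    have hB3 : ‖c⁻¹ * (c⁻¹ * J)‖ ≤ 24*C*M*δ := by
      rw [norm_mul, norm_mul, hnorm_cinv, htinv]
      calc δ^2 * (δ^2 * ‖J‖) ≤ δ^2 * (δ^2 * (24*C*M/δ^3)) := by gcongr
        _ = 24*C*M*δ := by field_simp
    have e : I0 + ((0:ℂ) - g δ / (c*δ) * E δ - c⁻¹ * (0 - w δ / (c*δ) * E δ - c⁻¹ * J))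
        = I0 + (-(g δ / (c*δ) * E δ) + (c⁻¹ * (w δ / (c*δ) * E δ) + c⁻¹ * (c⁻¹ * J))) := by
      ring
    rw [e]
    calc ‖I0 + (-(g δ / (c*δ) * E δ) + (c⁻¹ * (w δ / (c*δ) * E δ) + c⁻¹ * (c⁻¹ * J)))‖
        ≤ ‖I0‖ + ‖-(g δ / (c*δ) * E δ) + (c⁻¹ * (w δ / (c*δ) * E δ) + c⁻¹ * (c⁻¹ * J))‖ :=
          norm_add_le _ _
      _ ≤ ‖I0‖ + (‖g δ / (c*δ) * E δ‖ + (‖c⁻¹ * (w δ / (c*δ) * E δ)‖ + ‖c⁻¹ * (c⁻¹ * J)‖)) := by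
          refine add_le_add le_rfl (le_trans (norm_add_le _ _) ?_)
          rw [norm_neg]
          exact add_le_add le_rfl (norm_add_le _ _)
      _ ≤ C*M*δ + (C*M*δ + (12*C*M*δ + 24*C*M*δ)) :=
          add_le_add hI0B (add_le_add hB1 (add_le_add hB2 hB3))
      _ ≤ 40 * (C + 1) * δ * M := by
          nlinarith [mul_nonneg (mul_nonneg hC hM) hδ0.le, mul_nonneg hM hδ0.le]


end AuxStationaryPhase
end
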